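/- arXiv:math/0511053 — 4 statements merged into one kernel-verified Lean document; each statement's English description precedes it below -/
import Mathlib

section
/- Let κ > 0, α_κ = 1/(4+2κ), and S(y) = ∫_{α_κ}^{y} dx/(x(1-x)^{1+κ}) for y ∈ (0,1). Then y/(1-y) ~ (κ S(y))^{1/κ} as y → 1⁻, i.e., lim_{y→1⁻} (y/(1-y)) / (κ S(y))^{1/κ} = 1. -/
open MeasureTheory Real Filter

-- integrability of g x = 1/(1-x)^(1+κ) on [a,b] with b < 1, a ≤ b
lemma gInt (κ a b : ℝ) (hκ : 0 < κ) (hab : a ≤ b) (hb : b < 1) :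
    IntervalIntegrable (fun x => 1 / (1 - x) ^ (1 + κ)) volume a b := by
  apply ContinuousOn.intervalIntegrable
  apply ContinuousOn.div continuousOn_const
  · exact (continuousOn_const.sub continuousOn_id).rpow_const (fun x hx => Or.inr (by linarith))
  · intro x hx
    rw [Set.uIcc_of_le hab] at hx
    have : x < 1 := lt_of_le_of_lt hx.2 hb
    exact (Real.rpow_pos_of_pos (by linarith) _).ne'

lemma fInt (κ a b : ℝ) (hκ : 0 < κ) (ha : 0 < a) (hab : a ≤ b) (hb : b < 1) :
    IntervalIntegrable (fun x => 1 / (x * (1 - x) ^ (1 + κ))) volume a b := by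
  apply ContinuousOn.intervalIntegrable
  apply ContinuousOn.div continuousOn_const
  · exact continuousOn_id.mul
      ((continuousOn_const.sub continuousOn_id).rpow_const (fun x hx => Or.inr (by linarith)))
  · intro x hx
    rw [Set.uIcc_of_le hab] at hx
    have h1 : 0 < x := lt_of_lt_of_le ha hx.1
    have h2 : x < 1 := lt_of_le_of_lt hx.2 hb
    have := Real.rpow_pos_of_pos (by linarith : (0:ℝ) < 1 - x) (1 + κ)
    positivity

lemma gVal (κ a b : ℝ) (hκ : 0 < κ) (hab : a ≤ b) (hb : b < 1) :
    ∫ x in a..b, 1 / (1 - x) ^ (1 + κ) = ((1 - b) ^ (-κ) - (1 - a) ^ (-κ)) / κ := by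
  have key : ∀ x ∈ Set.uIcc a b,
      HasDerivAt (fun y => (1 - y) ^ (-κ) / κ) (1 / (1 - x) ^ (1 + κ)) x := by
    intro x hx
    rw [Set.uIcc_of_le hab] at hx
    have hx1 : x < 1 := lt_of_le_of_lt hx.2 hb
    have h0 : (0:ℝ) < 1 - x := by linarith
    have h1 : HasDerivAt (fun y : ℝ => 1 - y) (-1) x := (hasDerivAt_id x).const_sub 1
    have h2 : HasDerivAt (fun u : ℝ => u ^ (-κ)) (-κ * (1 - x) ^ (-κ - 1)) (1 - x) :=
      Real.hasDerivAt_rpow_const (Or.inl h0.ne')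
    have h3 := (h2.comp x h1).div_const κ
    refine h3.congr_deriv ?_
    rw [show (-κ - 1 : ℝ) = -(1 + κ) by ring, Real.rpow_neg h0.le, one_div]
    field_simp
  rw [intervalIntegral.integral_eq_sub_of_hasDerivAt key (gInt κ a b hκ hab hb)]
  ring

lemma bounds (κ y₀ y : ℝ) (hκ : 0 < κ) (h₀ : 1/2 ≤ y₀) (h₁ : y₀ ≤ y) (h₂ : y < 1) :
    (1 - y) ^ (-κ) - (1 - y₀) ^ (-κ) ≤ κ * ∫ x in y₀..y, 1 / (x * (1 - x) ^ (1 + κ)) ∧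
    κ * ∫ x in y₀..y, 1 / (x * (1 - x) ^ (1 + κ)) ≤
      (1 / y₀) * ((1 - y) ^ (-κ) - (1 - y₀) ^ (-κ)) := by
  have hy₀ : 0 < y₀ := by linarith
  have hfi := fInt κ y₀ y hκ hy₀ h₁ h₂
  have hgi := gInt κ y₀ y hκ h₁ h₂
  have hgv := gVal κ y₀ y hκ h₁ h₂
  constructor
  · have hmono : (∫ x in y₀..y, 1 / (1 - x) ^ (1 + κ))
        ≤ ∫ x in y₀..y, 1 / (x * (1 - x) ^ (1 + κ)) := by
      apply intervalIntegral.integral_mono_on h₁ hgi hfi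
      intro x hx
      have hx0 : 0 < x := lt_of_lt_of_le hy₀ hx.1
      have hx1 : x < 1 := lt_of_le_of_lt hx.2 h₂
      have ht : 0 < (1 - x) ^ (1 + κ) := Real.rpow_pos_of_pos (by linarith) _
      apply one_div_le_one_div_of_le (by positivity)
      nlinarith
    rw [hgv] at hmono
    have := mul_le_mul_of_nonneg_left hmono hκ.le
    calc (1 - y) ^ (-κ) - (1 - y₀) ^ (-κ)
        = κ * (((1 - y) ^ (-κ) - (1 - y₀) ^ (-κ)) / κ) := by field_simp
      _ ≤ κ * ∫ x in y₀..y, 1 / (x * (1 - x) ^ (1 + κ)) := this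
  · have hmono : (∫ x in y₀..y, 1 / (x * (1 - x) ^ (1 + κ)))
        ≤ ∫ x in y₀..y, (1 / y₀) * (1 / (1 - x) ^ (1 + κ)) := by
      apply intervalIntegral.integral_mono_on h₁ hfi (hgi.const_mul _)
      intro x hx
      have hx0 : 0 < x := lt_of_lt_of_le hy₀ hx.1
      have hx1 : x < 1 := lt_of_le_of_lt hx.2 h₂
      have ht : 0 < (1 - x) ^ (1 + κ) := Real.rpow_pos_of_pos (by linarith) _
      rw [div_mul_div_comm, one_mul]
      apply one_div_le_one_div_of_le (by positivity)
      nlinarith [hx.1]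
    rw [intervalIntegral.integral_const_mul, hgv] at hmono
    have := mul_le_mul_of_nonneg_left hmono hκ.le
    calc κ * ∫ x in y₀..y, 1 / (x * (1 - x) ^ (1 + κ))
        ≤ κ * (1 / y₀ * (((1 - y) ^ (-κ) - (1 - y₀) ^ (-κ)) / κ)) := this
      _ = (1 / y₀) * ((1 - y) ^ (-κ) - (1 - y₀) ^ (-κ)) := by field_simp

lemma fNonneg (κ a b : ℝ) (ha : 0 < a) (hab : a ≤ b) (hb : b < 1) :
    0 ≤ ∫ x in a..b, 1 / (x * (1 - x) ^ (1 + κ)) := by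
  apply intervalIntegral.integral_nonneg hab
  intro x hx
  have hx0 : 0 < x := lt_of_lt_of_le ha hx.1
  have hx1 : x < 1 := lt_of_le_of_lt hx.2 hb
  have ht : 0 < (1 - x) ^ (1 + κ) := Real.rpow_pos_of_pos (by linarith) _
  positivity

lemma core (κ : ℝ) (hκ : 0 < κ) :
    Tendsto (fun y : ℝ =>
        (1 - y) ^ κ * (κ * ∫ x in (1 / (4 + 2 * κ))..y, 1 / (x * (1 - x) ^ (1 + κ))))
      (nhdsWithin 1 (Set.Iio 1)) (nhds 1) := by
  set α := 1 / (4 + 2 * κ) with hαdef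
  have hα0 : 0 < α := by positivity
  have hα2 : α < 1 / 2 := by
    rw [hαdef, div_lt_div_iff₀ (by linarith) (by norm_num)]; linarith
  have hrpow0 : Tendsto (fun y : ℝ => (1 - y) ^ κ) (nhdsWithin 1 (Set.Iio 1)) (nhds 0) := by
    have h0 : Tendsto (fun y : ℝ => 1 - y) (nhdsWithin 1 (Set.Iio 1)) (nhds 0) := by
      have h : Tendsto (fun y : ℝ => 1 - y) (nhds 1) (nhds 0) :=
        (continuous_const.sub continuous_id).tendsto' 1 0 (by norm_num)
      exact h.mono_left nhdsWithin_le_nhds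
    have := h0.rpow_const (p := κ) (Or.inr hκ.le)
    simpa [Real.zero_rpow hκ.ne'] using this
  rw [tendsto_order]
  constructor
  · -- lower bound
    intro c hc
    have hLtend : Tendsto (fun y : ℝ => 1 - (1 - y) ^ κ * (1 - 1/2 : ℝ) ^ (-κ))
        (nhdsWithin 1 (Set.Iio 1)) (nhds 1) := by
      have := (tendsto_const_nhds (x := (1:ℝ))).sub
        (hrpow0.mul_const ((1 - 1/2 : ℝ) ^ (-κ)))
      simpa using this
    have hIoo : Set.Ioo (1/2 : ℝ) 1 ∈ nhdsWithin (1:ℝ) (Set.Iio 1) :=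
      Ioo_mem_nhdsLT_of_mem ⟨by norm_num, le_refl (1:ℝ)⟩
    filter_upwards [hIoo, hLtend.eventually (eventually_gt_nhds hc)] with y hy hLy
    have hy₁ : (1:ℝ)/2 < y := hy.1
    have hy2 : y < 1 := hy.2
    have h1y : (0:ℝ) < 1 - y := by linarith
    have hκy : (0:ℝ) < (1 - y) ^ κ := Real.rpow_pos_of_pos h1y κ
    have hsplit : (∫ x in α..(1/2:ℝ), 1 / (x * (1 - x) ^ (1 + κ)))
          + (∫ x in (1/2:ℝ)..y, 1 / (x * (1 - x) ^ (1 + κ)))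
        = ∫ x in α..y, 1 / (x * (1 - x) ^ (1 + κ)) :=
      intervalIntegral.integral_add_adjacent_intervals
        (fInt κ α (1/2) hκ hα0 hα2.le (by norm_num))
        (fInt κ (1/2) y hκ (by norm_num) hy₁.le hy2)
    have h₁ : 0 ≤ ∫ x in α..(1/2:ℝ), 1 / (x * (1 - x) ^ (1 + κ)) :=
      fNonneg κ α (1/2) hα0 hα2.le (by norm_num)
    have h₂ := (bounds κ (1/2) y hκ (le_refl _) hy₁.le hy2).1
    have e1 : (1 - y) ^ κ * (1 - y) ^ (-κ) = 1 := by
      rw [← Real.rpow_add h1y]; simp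
    rw [← hsplit]
    nlinarith [mul_le_mul_of_nonneg_left h₂ hκy.le,
      mul_nonneg (mul_nonneg hκy.le hκ.le) h₁]
  · -- upper bound
    intro c hc
    set y₀ : ℝ := max (1/2) (2 / (c + 1)) with hy₀def
    have hy₀half : (1:ℝ)/2 ≤ y₀ := le_max_left _ _
    have hy₀pos : 0 < y₀ := by linarith
    have hy₀lt1 : y₀ < 1 := by
      apply max_lt (by norm_num)
      rw [div_lt_one (by linarith)]; linarith
    have hinv : 1 / y₀ ≤ (c + 1) / 2 := by
      rw [div_le_div_iff₀ hy₀pos (by norm_num)]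
      have h2 : 2 / (c + 1) ≤ y₀ := le_max_right _ _
      have hc1 : (0:ℝ) < c + 1 := by linarith
      have he : (c + 1) * (2 / (c + 1)) = 2 := by field_simp
      nlinarith [mul_le_mul_of_nonneg_left h2 hc1.le]
    set C : ℝ := κ * ∫ x in α..y₀, 1 / (x * (1 - x) ^ (1 + κ)) with hCdef
    have hUtend : Tendsto (fun y : ℝ => (1 - y) ^ κ * C + 1 / y₀)
        (nhdsWithin 1 (Set.Iio 1)) (nhds (1 / y₀)) := by
      have := (hrpow0.mul_const C).add (tendsto_const_nhds (x := 1 / y₀))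
      simpa using this
    have hUc : 1 / y₀ < c := lt_of_le_of_lt hinv (by linarith)
    have hIoo : Set.Ioo y₀ 1 ∈ nhdsWithin (1:ℝ) (Set.Iio 1) :=
      Ioo_mem_nhdsLT_of_mem ⟨hy₀lt1, le_refl (1:ℝ)⟩
    filter_upwards [hIoo, hUtend.eventually (eventually_lt_nhds hUc)] with y hy hUy
    have hy₁ : y₀ < y := hy.1
    have hy2 : y < 1 := hy.2
    have h1y : (0:ℝ) < 1 - y := by linarith
    have hκy : (0:ℝ) < (1 - y) ^ κ := Real.rpow_pos_of_pos h1y κ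
    have hsplit : (∫ x in α..y₀, 1 / (x * (1 - x) ^ (1 + κ)))
          + (∫ x in y₀..y, 1 / (x * (1 - x) ^ (1 + κ)))
        = ∫ x in α..y, 1 / (x * (1 - x) ^ (1 + κ)) :=
      intervalIntegral.integral_add_adjacent_intervals
        (fInt κ α y₀ hκ hα0 (by linarith) hy₀lt1)
        (fInt κ y₀ y hκ hy₀pos hy₁.le hy2)
    have h₂ := (bounds κ y₀ y hκ hy₀half hy₁.le hy2).2
    have e1 : (1 - y) ^ κ * (1 - y) ^ (-κ) = 1 := by
      rw [← Real.rpow_add h1y]; simp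
    have hnn : 0 ≤ (1 - y) ^ κ * ((1 / y₀) * (1 - y₀) ^ (-κ)) := by
      have := Real.rpow_nonneg (by linarith : (0:ℝ) ≤ 1 - y₀) (-κ)
      positivity
    rw [← hsplit]
    nlinarith [mul_le_mul_of_nonneg_left h₂ hκy.le]

/-- With `S y = ∫_{α_κ}^{y} dx / (x (1-x)^{1+κ})`, `α_κ = 1/(4+2κ)`,
we have `y/(1-y) ~ (κ S(y))^{1/κ}` as `y → 1⁻`. -/
theorem stmt1 (κ : ℝ) (hκ : 0 < κ) :
    Tendsto (fun y : ℝ =>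
        (y / (1 - y)) /
          (κ * ∫ x in (1 / (4 + 2 * κ))..y, 1 / (x * (1 - x) ^ (1 + κ))) ^ (1 / κ))
      (nhdsWithin 1 (Set.Iio 1)) (nhds 1) := by
  have hG := core κ hκ
  have hpos : ∀ᶠ y in nhdsWithin (1:ℝ) (Set.Iio 1),
      0 < (1 - y) ^ κ * (κ * ∫ x in (1 / (4 + 2 * κ))..y, 1 / (x * (1 - x) ^ (1 + κ))) :=
    hG.eventually (eventually_gt_nhds zero_lt_one)
  have hlt : ∀ᶠ y in nhdsWithin (1:ℝ) (Set.Iio 1), y ∈ Set.Iio (1:ℝ) := self_mem_nhdsWithin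
  have heq : ∀ᶠ y in nhdsWithin (1:ℝ) (Set.Iio 1),
      (y / (1 - y)) /
          (κ * ∫ x in (1 / (4 + 2 * κ))..y, 1 / (x * (1 - x) ^ (1 + κ))) ^ (1 / κ)
        = y / ((1 - y) ^ κ *
            (κ * ∫ x in (1 / (4 + 2 * κ))..y, 1 / (x * (1 - x) ^ (1 + κ)))) ^ (1 / κ) := by
    filter_upwards [hpos, hlt] with y hy hy1
    set S := κ * ∫ x in (1 / (4 + 2 * κ))..y, 1 / (x * (1 - x) ^ (1 + κ)) with hS
    have hy1' : y < 1 := hy1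
    have h1y : (0:ℝ) < 1 - y := by linarith
    have hκy : (0:ℝ) < (1 - y) ^ κ := Real.rpow_pos_of_pos h1y κ
    have hSpos : 0 < S := by
      by_contra h
      push_neg at h
      nlinarith
    have hmul : ((1 - y) ^ κ * S) ^ (1 / κ) = ((1 - y) ^ κ) ^ (1/κ) * S ^ (1/κ) :=
      Real.mul_rpow hκy.le hSpos.le
    have hyy : ((1 - y) ^ κ) ^ (1/κ) = 1 - y := by
      rw [← Real.rpow_mul h1y.le, mul_one_div, div_self hκ.ne', Real.rpow_one]
    rw [hmul, hyy]
    have hSne : S ^ (1/κ) ≠ 0 := (Real.rpow_pos_of_pos hSpos _).ne'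
    field_simp
  refine Tendsto.congr' (heq.mono fun y h => h.symm) ?_
  have h1 : Tendsto (fun y : ℝ => y) (nhdsWithin 1 (Set.Iio 1)) (nhds 1) :=
    tendsto_id.mono_right nhdsWithin_le_nhds
  have h2 : Tendsto (fun y : ℝ => ((1 - y) ^ κ *
      (κ * ∫ x in (1 / (4 + 2 * κ))..y, 1 / (x * (1 - x) ^ (1 + κ)))) ^ (1 / κ))
      (nhdsWithin 1 (Set.Iio 1)) (nhds 1) := by
    have := hG.rpow_const (p := 1/κ) (Or.inr (by positivity))
    simpa using this
  simpa [Pi.div_def] using h1.div h2 one_ne_zero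
end

section
/- Let κ > 0, α_κ = 1/(4+2κ), and S(y) = ∫_{α_κ}^{y} dx/(x(1-x)^{1+κ}) with inverse S^{-1}. Then 1 - S^{-1}(u) ~ (κ u)^{-1/κ} as u → +∞, i.e., lim_{u→∞} (1 - S^{-1}(u))·(κu)^{1/κ} = 1. -/
open MeasureTheory Real Filter

lemma stmt3_fpos {κ x : ℝ} (hx0 : 0 < x) (hx1 : x < 1) :
    0 < 1 / (x * (1 - x) ^ (1 + κ)) :=
  one_div_pos.mpr (mul_pos hx0 (rpow_pos_of_pos (by linarith) _))

lemma stmt3_intable (κ : ℝ) {a b : ℝ} (ha : 0 < a) (ha1 : a < 1) (hb0 : 0 < b) (hb : b < 1) :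
    IntervalIntegrable (fun x => 1 / (x * (1 - x) ^ (1 + κ))) volume a b := by
  apply ContinuousOn.intervalIntegrable
  have hsub : Set.uIcc a b ⊆ Set.Ioo (0:ℝ) 1 := by
    intro x hx
    rw [Set.mem_uIcc] at hx
    constructor <;> rcases hx with ⟨h1, h2⟩ | ⟨h1, h2⟩ <;> linarith
  apply ContinuousOn.div continuousOn_const
  · exact continuousOn_id.mul ((continuousOn_const.sub continuousOn_id).rpow_const
      (fun x hx => Or.inl (by have := (hsub hx).2; simp; linarith)))
  · intro x hx
    have h := hsub hx
    exact ne_of_gt (mul_pos h.1 (rpow_pos_of_pos (by linarith [h.2]) _))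

lemma stmt3_gintable (κ : ℝ) {a b : ℝ} (ha1 : a < 1) (hb : b < 1) :
    IntervalIntegrable (fun x => (1 - x) ^ (-(1 + κ))) volume a b := by
  apply ContinuousOn.intervalIntegrable
  have hsub : ∀ x ∈ Set.uIcc a b, x < 1 := by
    intro x hx
    rw [Set.mem_uIcc] at hx
    rcases hx with ⟨h1, h2⟩ | ⟨h1, h2⟩ <;> linarith
  exact (continuousOn_const.sub continuousOn_id).rpow_const
    (fun x hx => Or.inl (by have := hsub x hx; simp; linarith))

lemma stmt3_ftc (κ : ℝ) (hκ : 0 < κ) {a b : ℝ} (ha1 : a < 1) (hb : b < 1) :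
    (∫ x in a..b, (1 - x) ^ (-(1 + κ))) = ((1 - b) ^ (-κ) - (1 - a) ^ (-κ)) / κ := by
  have h : ∀ x ∈ Set.uIcc a b,
      HasDerivAt (fun y => (1 - y) ^ (-κ) / κ) ((1 - x) ^ (-(1 + κ))) x := by
    intro x hx
    have hx1 : x < 1 := by
      rw [Set.mem_uIcc] at hx
      rcases hx with ⟨h1, h2⟩ | ⟨h1, h2⟩ <;> linarith
    have h1 : HasDerivAt (fun y : ℝ => 1 - y) (-1) x := by
      simpa using (hasDerivAt_id x).const_sub 1
    have h2 := h1.rpow_const (p := -κ) (Or.inl (by linarith))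
    have h3 := h2.div_const κ
    refine h3.congr_deriv ?_
    rw [show -κ - 1 = -(1+κ) by ring]
    field_simp
  rw [intervalIntegral.integral_eq_sub_of_hasDerivAt h (stmt3_gintable κ ha1 hb)]
  ring

lemma stmt3_bounds (κ : ℝ) {c y : ℝ} (hc0 : 0 < c) (hcy : c ≤ y) (hy1 : y < 1) :
    (∫ x in c..y, (1 - x) ^ (-(1+κ))) ≤ (∫ x in c..y, 1 / (x * (1-x)^(1+κ))) ∧
    (∫ x in c..y, 1 / (x * (1-x)^(1+κ))) ≤ (1/c) * ∫ x in c..y, (1 - x) ^ (-(1+κ)) := by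
  have hc1 : c < 1 := lt_of_le_of_lt hcy hy1
  have hy0 : 0 < y := lt_of_lt_of_le hc0 hcy
  have intf := stmt3_intable κ hc0 hc1 hy0 hy1
  have intg := stmt3_gintable κ hc1 hy1
  have key : ∀ x ∈ Set.Icc c y,
      (1 - x) ^ (-(1+κ)) ≤ 1 / (x * (1-x)^(1+κ)) ∧
      1 / (x * (1-x)^(1+κ)) ≤ (1/c) * (1 - x) ^ (-(1+κ)) := by
    intro x hx
    have hx0 : 0 < x := lt_of_lt_of_le hc0 hx.1
    have hx1 : x < 1 := lt_of_le_of_lt hx.2 hy1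
    have hA : 0 < (1-x)^(1+κ) := rpow_pos_of_pos (by linarith) _
    have hgx : (1-x)^(-(1+κ)) = 1 / ((1-x)^(1+κ)) := by
      rw [rpow_neg (by linarith), one_div]
    constructor
    · rw [hgx]
      apply one_div_le_one_div_of_le (mul_pos hx0 hA)
      exact mul_le_of_le_one_left hA.le hx1.le
    · rw [hgx, one_div_mul_one_div]
      apply one_div_le_one_div_of_le (mul_pos hc0 hA)
      exact mul_le_mul_of_nonneg_right hx.1 hA.le
  constructor
  · exact intervalIntegral.integral_mono_on hcy intg intf (fun x hx => (key x hx).1)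
  · rw [← intervalIntegral.integral_const_mul]
    exact intervalIntegral.integral_mono_on hcy intf (intg.const_mul _)
      (fun x hx => (key x hx).2)

set_option maxHeartbeats 1600000 in
/-- Let `S y = ∫_{α_κ}^{y} dx / (x (1-x)^{1+κ})` on `(0,1)`, a strictly
increasing continuous bijection onto `ℝ`, with inverse `Sinv`. Then
`1 - Sinv u ~ (κ u)^{-1/κ}` as `u → ∞`, i.e. `(1 - Sinv u) · (κ u)^{1/κ} → 1`. -/
theorem stmt3 (κ : ℝ) (hκ : 0 < κ) (Sinv : ℝ → ℝ)
    (hSinv : ∀ u : ℝ, Sinv u ∈ Set.Ioo (0 : ℝ) 1 ∧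
      (∫ x in (1 / (4 + 2 * κ))..(Sinv u), 1 / (x * (1 - x) ^ (1 + κ))) = u) :
    Tendsto (fun u : ℝ => (1 - Sinv u) * (κ * u) ^ (1 / κ)) atTop (nhds 1) := by
  set A : ℝ := 1 / (4 + 2 * κ) with hAdef
  have hA0 : 0 < A := by rw [hAdef]; positivity
  have hA1 : A < 1 := by rw [hAdef, div_lt_one (by linarith)]; linarith
  -- Step A : Sinv u → 1
  have htendy : ∀ ε > (0:ℝ), ∀ᶠ u in atTop, 1 - ε < Sinv u := by
    intro ε hε
    set ε' := min ε ((1 - A)/2) with hε'def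
    have hε'0 : 0 < ε' := lt_min hε (by linarith)
    have hε'A : A < 1 - ε' := by
      have : ε' ≤ (1 - A)/2 := min_le_right _ _
      linarith
    have hε'ε : ε' ≤ ε := min_le_left _ _
    set C := ∫ x in A..(1 - ε'), 1 / (x * (1 - x) ^ (1 + κ)) with hCdef
    filter_upwards [eventually_gt_atTop C] with u hu
    by_contra hcon
    push_neg at hcon
    obtain ⟨⟨hy0, hy1⟩, hS⟩ := hSinv u
    have hyε' : Sinv u ≤ 1 - ε' := le_trans hcon (by linarith)
    have hle : u ≤ C := by
      rcases le_or_gt A (Sinv u) with hAy | hAy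
      · have h1 := stmt3_intable κ hA0 hA1 hy0 hy1
        have h2 := stmt3_intable κ hy0 hy1 (by linarith : (0:ℝ) < 1 - ε') (by linarith)
        have hadd := intervalIntegral.integral_add_adjacent_intervals h1 h2
        have hnn : 0 ≤ ∫ x in (Sinv u)..(1 - ε'), 1 / (x * (1 - x) ^ (1 + κ)) := by
          apply intervalIntegral.integral_nonneg hyε'
          intro x hx
          exact (stmt3_fpos (lt_of_lt_of_le hy0 hx.1) (lt_of_le_of_lt hx.2 (by linarith))).le
        rw [hS] at hadd
        rw [hCdef, ← hadd]
        linarith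
      · have hCnn : 0 ≤ C := by
          apply intervalIntegral.integral_nonneg (by linarith)
          intro x hx
          exact (stmt3_fpos (lt_of_lt_of_le hA0 hx.1) (lt_of_le_of_lt hx.2 (by linarith))).le
        have hu0 : u ≤ 0 := by
          rw [← hS, intervalIntegral.integral_symm]
          have hnn : 0 ≤ ∫ x in (Sinv u)..A, 1 / (x * (1 - x) ^ (1 + κ)) := by
            apply intervalIntegral.integral_nonneg hAy.le
            intro x hx
            exact (stmt3_fpos (lt_of_lt_of_le hy0 hx.1) (lt_of_le_of_lt hx.2 hA1)).le
          linarith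
        linarith
    linarith
  -- Step B : 1 - Sinv u → 0 and (1 - Sinv u)^κ → 0
  have htend0 : Tendsto (fun u => 1 - Sinv u) atTop (nhds 0) := by
    rw [Metric.tendsto_nhds]
    intro ε hε
    filter_upwards [htendy ε hε] with u hu
    have hy := (hSinv u).1
    rw [Real.dist_eq, sub_zero, abs_of_pos (by linarith [hy.2])]
    linarith
  have hP : Tendsto (fun u => (1 - Sinv u) ^ κ) atTop (nhds 0) := by
    have := htend0.rpow_const (p := κ) (Or.inr hκ.le)
    rwa [Real.zero_rpow hκ.ne'] at this
  -- Step C : κ u (1 - Sinv u)^κ → 1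
  have hmain : Tendsto (fun u => κ * u * (1 - Sinv u) ^ κ) atTop (nhds 1) := by
    rw [Metric.tendsto_nhds]
    intro δ hδ
    obtain ⟨ε, hε0, hεδ, hεA, hεh⟩ : ∃ ε : ℝ, 0 < ε ∧ ε ≤ δ/4 ∧ ε ≤ (1-A)/2 ∧ ε ≤ 1/2 :=
      ⟨min (δ/4) (min ((1-A)/2) (1/2)),
        lt_min (by linarith) (lt_min (by linarith) (by norm_num)),
        min_le_left _ _, le_trans (min_le_right _ _) (min_le_left _ _),
        le_trans (min_le_right _ _) (min_le_right _ _)⟩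
    have hc0 : 0 < 1 - ε := by linarith
    have hcA : A < 1 - ε := by linarith
    have hc1 : 1 - ε < 1 := by linarith
    have hE0 : 0 < ε ^ (-κ) := rpow_pos_of_pos hε0 _
    obtain ⟨C, hC⟩ : ∃ C, (∫ x in A..(1-ε), 1 / (x * (1 - x) ^ (1 + κ))) = C := ⟨_, rfl⟩
    have hM0 : 0 < κ * |C| + ε ^ (-κ) + 1 := by positivity
    have hθ0 : 0 < δ / (2 * (κ * |C| + ε ^ (-κ) + 1)) := by positivity
    filter_upwards [htendy ε hε0, Tendsto.eventually_lt_const hθ0 hP] with u hyε hPθ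
    obtain ⟨⟨hy0, hy1⟩, hS⟩ := hSinv u
    set y := Sinv u with hydef
    have hyc : 1 - ε < y := hyε
    have hPpos : 0 < (1 - y) ^ κ := rpow_pos_of_pos (by linarith) _
    have h1 := stmt3_intable κ hA0 hA1 hc0 hc1
    have h2 := stmt3_intable κ hc0 hc1 hy0 hy1
    have hsplit := intervalIntegral.integral_add_adjacent_intervals h1 h2
    rw [hS, hC] at hsplit
    obtain ⟨I, hI⟩ : ∃ I, (∫ x in (1-ε)..y, 1 / (x * (1 - x) ^ (1 + κ))) = I := ⟨_, rfl⟩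
    rw [hI] at hsplit
    -- hsplit : C + I = u
    have hQP : (1 - y) ^ (-κ) * (1 - y) ^ κ = 1 := by
      rw [rpow_neg (by linarith : (0:ℝ) ≤ 1 - y)]
      exact inv_mul_cancel₀ hPpos.ne'
    have hbd := stmt3_bounds κ hc0 hyc.le hy1
    have hftc := stmt3_ftc κ hκ hc1 hy1
    have h1c : (1:ℝ) - (1 - ε) = ε := by ring
    rw [h1c] at hftc
    rw [hftc, hI] at hbd
    obtain ⟨hbl, hbu⟩ := hbd
    have hX : 0 ≤ ε ^ (-κ) * (1 - y) ^ κ := mul_nonneg hE0.le hPpos.le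
    have hIl : 1 - ε ^ (-κ) * (1 - y) ^ κ ≤ κ * I * ((1 - y) ^ κ) := by
      have h := mul_le_mul_of_nonneg_right hbl hPpos.le
      have h2' : ((1 - y) ^ (-κ) - ε ^ (-κ)) / κ * ((1 - y) ^ κ)
          = (1 - ε ^ (-κ) * (1 - y) ^ κ) / κ := by
        rw [div_mul_eq_mul_div, sub_mul, hQP]
      rw [h2', div_le_iff₀ hκ] at h
      linarith [h]
    have hIu : κ * I * ((1 - y) ^ κ) ≤ 1 / (1 - ε) := by
      have h := mul_le_mul_of_nonneg_right hbu hPpos.le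
      have h2' : 1 / (1 - ε) * (((1 - y) ^ (-κ) - ε ^ (-κ)) / κ) * ((1 - y) ^ κ)
          = (1 - ε ^ (-κ) * (1 - y) ^ κ) / κ * (1 / (1 - ε)) := by
        linear_combination ((1 / (1 - ε)) * (1 / κ)) * hQP
      rw [h2'] at h
      have h6 := mul_le_mul_of_nonneg_left h hκ.le
      have h7 : κ * ((1 - ε ^ (-κ) * (1 - y) ^ κ) / κ * (1 / (1 - ε)))
          = (1 - ε ^ (-κ) * (1 - y) ^ κ) * (1 / (1 - ε)) := by
        field_simp
      have h8 : (1 - ε ^ (-κ) * (1 - y) ^ κ) * (1 / (1 - ε)) ≤ 1 * (1 / (1 - ε)) :=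
        mul_le_mul_of_nonneg_right (by linarith) (one_div_pos.mpr hc0).le
      rw [h7] at h6
      rw [one_mul] at h8
      linarith [h6, h8]
    have hu_eq : κ * u * ((1 - y) ^ κ) = κ * C * ((1 - y) ^ κ) + κ * I * ((1 - y) ^ κ) := by
      rw [← hsplit]; ring
    have hκP : 0 ≤ κ * ((1 - y) ^ κ) := by positivity
    have hC1 : κ * C * ((1 - y) ^ κ) ≤ κ * |C| * ((1 - y) ^ κ) := by
      nlinarith [le_abs_self C, hκP]
    have hC2 : -(κ * |C| * ((1 - y) ^ κ)) ≤ κ * C * ((1 - y) ^ κ) := by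
      nlinarith [neg_abs_le C, hκP]
    have hMP : (κ * |C| + ε ^ (-κ) + 1) * ((1 - y) ^ κ) < δ / 2 := by
      have h := mul_lt_mul_of_pos_left hPθ hM0
      have heq : (κ * |C| + ε ^ (-κ) + 1) * (δ / (2 * (κ * |C| + ε ^ (-κ) + 1))) = δ / 2 := by
        field_simp
      linarith [h, heq]
    have hcb : 1 / (1 - ε) ≤ 1 + 2 * ε := by
      rw [div_le_iff₀ hc0]; nlinarith [hε0.le, hεh]
    have hexp : (κ * |C| + ε ^ (-κ) + 1) * ((1 - y) ^ κ)
        = κ * |C| * ((1 - y) ^ κ) + ε ^ (-κ) * ((1 - y) ^ κ) + (1 - y) ^ κ := by ring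
    rw [Real.dist_eq, abs_lt]
    constructor
    · linarith [hu_eq, hC2, hIl, hMP, hexp, hPpos.le, hδ, hX]
    · linarith [hu_eq, hC1, hIu, hMP, hexp, hX, hPpos.le, hcb, hεδ, hδ]
  -- conclusion
  have hfinal := hmain.rpow_const (p := 1/κ) (Or.inr (by positivity))
  rw [one_rpow] at hfinal
  apply Tendsto.congr' _ hfinal
  filter_upwards [eventually_ge_atTop (1:ℝ)] with u hu
  obtain ⟨⟨hy0, hy1⟩, -⟩ := hSinv u
  have h1y : (0:ℝ) ≤ 1 - Sinv u := by linarith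
  have hκu : (0:ℝ) ≤ κ * u := by positivity
  rw [Real.mul_rpow hκu (rpow_nonneg h1y κ), ← Real.rpow_mul h1y,
    mul_one_div_cancel hκ.ne', rpow_one]
  ring
end

section
/- Under the assumptions of the previous lemma (F defined by A_∞ − A(F(r)) = e^{−κr/2}), for every ε > 0, almost surely for all sufficiently large r, (1 − ε) r ≤ F(r) ≤ (1 + ε) r. -/
open MeasureTheory ProbabilityTheory Real Filter
open scoped NNReal ENNReal Topology

set_option maxHeartbeats 1000000


lemma mexp (l : ℝ) : Measurable fun x : ℝ => ENNReal.ofReal (Real.exp (l * x)) :=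
  Measurable.ennreal_ofReal (Real.measurable_exp.comp (measurable_id.const_mul l))

lemma gauss_pdf_shift (v : ℝ≥0) (hv : v ≠ 0) (l x : ℝ) :
    Real.exp (l * x) * gaussianPDFReal 0 v x
      = Real.exp (l ^ 2 * v / 2) * gaussianPDFReal (l * v) v x := by
  have hv' : (0:ℝ) < (v:ℝ) := by positivity
  rw [gaussianPDFReal_def, gaussianPDFReal_def]
  simp only
  rw [mul_left_comm, mul_left_comm (Real.exp (l^2*v/2)), ← Real.exp_add, ← Real.exp_add]
  congr 2
  field_simp
  ring

lemma lint_mgf (v : ℝ≥0) (l : ℝ) :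
    ∫⁻ x, ENNReal.ofReal (Real.exp (l * x)) ∂(gaussianReal 0 v)
      = ENNReal.ofReal (Real.exp (l ^ 2 * (v:ℝ) / 2)) := by
  by_cases hv : v = 0
  · subst hv
    rw [gaussianReal_zero_var, lintegral_dirac' _ (mexp l)]
    simp
  · rw [gaussianReal_of_var_ne_zero _ hv,
      lintegral_withDensity_eq_lintegral_mul _ (measurable_gaussianPDF 0 v) (mexp l)]
    have : ∀ x : ℝ, (gaussianPDF 0 v * fun x => ENNReal.ofReal (Real.exp (l * x))) x
        = ENNReal.ofReal (Real.exp (l ^ 2 * (v:ℝ) / 2)) * ENNReal.ofReal (gaussianPDFReal (l*v) v x) := by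
      intro x
      simp only [Pi.mul_apply, gaussianPDF]
      rw [← ENNReal.ofReal_mul (gaussianPDFReal_nonneg 0 v x), mul_comm (gaussianPDFReal 0 v x),
        gauss_pdf_shift v hv l x, ENNReal.ofReal_mul (Real.exp_pos _).le]
    rw [lintegral_congr this, lintegral_const_mul _ ((measurable_gaussianPDFReal (l*v) v).ennreal_ofReal),
      lintegral_gaussianPDFReal_eq_one (l*v) hv, mul_one]

lemma lint_mgf_map {Ω : Type*} [MeasureSpace Ω] (X : Ω → ℝ) (v : ℝ≥0)
    (hX : Measure.map X ℙ = gaussianReal 0 v) (l : ℝ) :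
    ∫⁻ ω, ENNReal.ofReal (Real.exp (l * X ω)) ∂ℙ
      = ENNReal.ofReal (Real.exp (l ^ 2 * (v:ℝ) / 2)) := by
  have hXm : AEMeasurable X ℙ := by
    by_contra h
    rw [Measure.map_of_not_aemeasurable h] at hX
    exact (IsProbabilityMeasure.ne_zero (gaussianReal 0 v)) hX.symm
  rw [← lint_mgf v l, ← hX, lintegral_map' (mexp l).aemeasurable hXm]

lemma markov_ofReal {Ω : Type*} [MeasureSpace Ω] (f : Ω → ℝ≥0∞)
    (hf : AEMeasurable f ℙ) (L : ℝ)
    (hL : ∫⁻ ω, f ω ∂ℙ ≤ ENNReal.ofReal (Real.exp L)) (c : ℝ) :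
    ℙ {ω | ENNReal.ofReal (Real.exp c) ≤ f ω} ≤ ENNReal.ofReal (Real.exp (L - c)) := by
  have key := (mul_meas_ge_le_lintegral₀ hf (ENNReal.ofReal (Real.exp c))).trans hL
  have key2 : ℙ {ω | ENNReal.ofReal (Real.exp c) ≤ f ω} * ENNReal.ofReal (Real.exp c)
      ≤ ENNReal.ofReal (Real.exp L) := by rw [mul_comm]; exact key
  have := (ENNReal.le_div_iff_mul_le (Or.inl (ENNReal.ofReal_pos.2 (Real.exp_pos c)).ne')
      (Or.inl ENNReal.ofReal_ne_top)).2 key2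
  refine this.trans (le_of_eq ?_)
  rw [← ENNReal.ofReal_div_of_pos (Real.exp_pos _), Real.exp_sub]

lemma chernoff {Ω : Type*} [MeasureSpace Ω] [IsProbabilityMeasure (ℙ : Measure Ω)]
    (X : Ω → ℝ) (v : ℝ≥0) (hX : Measure.map X ℙ = gaussianReal 0 v) (l a : ℝ) :
    ℙ {ω | a ≤ l * X ω} ≤ ENNReal.ofReal (Real.exp (l ^ 2 * (v:ℝ) / 2 - a)) := by
  have hXm : AEMeasurable X ℙ := by
    by_contra h
    rw [Measure.map_of_not_aemeasurable h] at hX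
    exact (IsProbabilityMeasure.ne_zero (gaussianReal 0 v)) hX.symm
  have hset : {ω | ENNReal.ofReal (Real.exp a) ≤ ENNReal.ofReal (Real.exp (l * X ω))}
      = {ω | a ≤ l * X ω} := by
    ext ω
    simp only [Set.mem_setOf_eq, ENNReal.ofReal_le_ofReal_iff (Real.exp_pos _).le,
      Real.exp_le_exp]
  have := markov_ofReal (fun ω => ENNReal.ofReal (Real.exp (l * X ω)))
    ((mexp l).comp_aemeasurable hXm) (l ^ 2 * (v:ℝ) / 2)
    (le_of_eq (lint_mgf_map X v hX l)) a
  rwa [hset] at this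


lemma exists_mod {Ω : Type*} [MeasureSpace Ω] (W : ℝ → Ω → ℝ)
    (hc : ∀ ω, Continuous fun t => W t ω) (haem : ∀ q : ℚ, AEMeasurable (W (q:ℝ)) ℙ) :
    ∃ (V : ℝ → Ω → ℝ) (N : Set Ω), MeasurableSet N ∧ ℙ N = 0 ∧
      (∀ ω, ω ∉ N → ∀ t, V t ω = W t ω) ∧ Measurable (fun p : ℝ × Ω => V p.1 p.2) := by
  classical
  set g : ℚ → Ω → ℝ := fun q => (haem q).mk _ with hgdef
  have hg : ∀ q : ℚ, ∀ᵐ ω ∂ℙ, W (q:ℝ) ω = g q ω := fun q => (haem q).ae_eq_mk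
  have hgm : ∀ q, Measurable (g q) := fun q => (haem q).measurable_mk
  have hS : ℙ (⋃ q : ℚ, {ω | W (q:ℝ) ω ≠ g q ω}) = 0 :=
    measure_iUnion_null fun q => by simpa [ae_iff] using hg q
  obtain ⟨N, hSN, hNm, hN0⟩ := exists_measurable_superset_of_null hS
  set V : ℝ → Ω → ℝ := fun t ω => if ω ∈ N then 0 else W t ω with hVdef
  have hVW : ∀ ω, ω ∉ N → ∀ t, V t ω = W t ω := fun ω h t => if_neg h
  have hWg : ∀ ω, ω ∉ N → ∀ q : ℚ, W (q:ℝ) ω = g q ω := by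
    intro ω h q
    by_contra hne
    exact h (hSN (Set.mem_iUnion.2 ⟨q, hne⟩))
  have hVq : ∀ q : ℚ, Measurable (V (q:ℝ)) := by
    intro q
    have : V (q:ℝ) = fun ω => if ω ∈ N then 0 else g q ω := by
      funext ω
      by_cases h : ω ∈ N
      · simp [hVdef, h]
      · simp [hVdef, h, hWg ω h q]
    rw [this]
    exact Measurable.ite hNm measurable_const (hgm q)
  have hVcont : ∀ ω, Continuous fun t => V t ω := by
    intro ω
    by_cases h : ω ∈ N
    · simpa [hVdef, h] using continuous_const
    · simpa [hVdef, h] using hc ω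
  -- dyadic approximations
  set Vk : ℕ → ℝ × Ω → ℝ := fun k p => V ((⌊p.1 * 2 ^ k⌋ : ℤ) / 2 ^ k) p.2 with hVkdef
  have hVkm : ∀ k, Measurable (Vk k) := by
    intro k
    have h2 : Measurable fun q : Ω × ℤ => V ((q.2 : ℝ) / 2 ^ k) q.1 := by
      apply measurable_from_prod_countable_left
      intro m
      show Measurable fun ω => V ((m:ℝ) / 2 ^ k) ω
      have : ((m : ℝ) / 2 ^ k) = (((m / (2:ℚ) ^ k : ℚ)) : ℝ) := by push_cast; ring
      rw [this]
      exact hVq _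
    have h1 : Measurable fun p : ℝ × Ω => (p.2, (⌊p.1 * 2 ^ k⌋ : ℤ)) :=
      measurable_snd.prodMk ((measurable_fst.mul_const _).floor)
    exact h2.comp h1
  have htend : ∀ p : ℝ × Ω, Tendsto (fun k => Vk k p) atTop (𝓝 (V p.1 p.2)) := by
    rintro ⟨t, ω⟩
    have h0 : Tendsto (fun k : ℕ => ((1:ℝ)/2) ^ k) atTop (𝓝 0) :=
      tendsto_pow_atTop_nhds_zero_of_lt_one (by norm_num) (by norm_num)
    have htk : Tendsto (fun k : ℕ => ((⌊t * 2 ^ k⌋ : ℤ) : ℝ) / 2 ^ k) atTop (𝓝 t) := by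
      refine tendsto_of_tendsto_of_tendsto_of_le_of_le (g := fun k : ℕ => t - ((1:ℝ)/2)^k)
        (h := fun _ => t) (by simpa using (tendsto_const_nhds (x := t)).sub h0)
        tendsto_const_nhds ?_ ?_
      · intro k
        have h1 : t * 2 ^ k - 1 < (⌊t * 2 ^ k⌋ : ℝ) := Int.sub_one_lt_floor _
        have h2 : (0:ℝ) < 2 ^ k := by positivity
        rw [le_div_iff₀ h2]
        have : ((1:ℝ)/2) ^ k * 2 ^ k = 1 := by
          rw [← mul_pow]; norm_num
        nlinarith
      · intro k
        have h2 : (0:ℝ) < 2 ^ k := by positivity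
        rw [div_le_iff₀ h2]
        exact Int.floor_le _
    exact ((hVcont ω).tendsto t).comp htk
  exact ⟨V, N, hNm, hN0, hVW,
    measurable_of_tendsto_metrizable hVkm (tendsto_pi_nhds.2 htend)⟩

lemma jensen_exp (φ : ℝ → ℝ) (hφ : Continuous φ) :
    Real.exp (∫ s in (0:ℝ)..1, φ s) ≤ ∫ s in (0:ℝ)..1, Real.exp (φ s) := by
  set c := ∫ s in (0:ℝ)..1, φ s with hc
  have h1 : ∀ s ∈ Set.Icc (0:ℝ) 1, Real.exp c * (1 + (φ s - c)) ≤ Real.exp (φ s) := by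
    intro s _
    have h := Real.add_one_le_exp (φ s - c)
    have hec := Real.exp_pos c
    have : Real.exp c * Real.exp (φ s - c) = Real.exp (φ s) := by
      rw [← Real.exp_add]; ring_nf
    nlinarith
  have h2 : (∫ s in (0:ℝ)..1, Real.exp c * (1 + (φ s - c)))
      ≤ ∫ s in (0:ℝ)..1, Real.exp (φ s) := by
    apply intervalIntegral.integral_mono_on zero_le_one
    · exact ((continuous_const.mul (continuous_const.add (hφ.sub continuous_const))).intervalIntegrable _ _)
    · exact ((Real.continuous_exp.comp hφ).intervalIntegrable _ _)
    · exact h1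
  have h3 : (∫ s in (0:ℝ)..1, Real.exp c * (1 + (φ s - c))) = Real.exp c := by
    rw [intervalIntegral.integral_const_mul]
    have h4 : (∫ s in (0:ℝ)..1, (1 + (φ s - c)))
        = (∫ s in (0:ℝ)..1, (1:ℝ)) + ((∫ s in (0:ℝ)..1, φ s) - ∫ s in (0:ℝ)..1, (c:ℝ)) := by
      rw [intervalIntegral.integral_add intervalIntegrable_const
        (by exact (hφ.sub continuous_const).intervalIntegrable _ _ : IntervalIntegrable (fun s => φ s - c) volume 0 1),
        intervalIntegral.integral_sub (hφ.intervalIntegrable _ _) intervalIntegrable_const]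
    rw [h4]
    simp [hc]
  linarith

lemma det_lemma (w : ℝ → ℝ) (hw : Continuous w) (κ ε δ : ℝ) (hκ : 0 < κ) (hε : 0 < ε)
    (hδ : δ = κ * min ε 1 / 16)
    (hint : IntegrableOn (fun u => Real.exp (w u - κ * u / 2)) (Set.Ioi 0))
    (f : ℝ → ℝ)
    (hf : ∀ r : ℝ, 0 < r →
      (∫ u in Set.Ioi (0:ℝ), Real.exp (w u - κ * u / 2))
        - (∫ u in (0:ℝ)..(f r), Real.exp (w u - κ * u / 2)) = Real.exp (-κ * r / 2))
    (N : ℕ)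
    (hN : ∀ n : ℕ, N ≤ n →
      |w n| ≤ δ * (n + 1) ∧
      (∫ s in (0:ℝ)..1, Real.exp (w (n + s) - w n)) ≤ Real.exp (δ * (n + 1)) ∧
      (∫ s in (0:ℝ)..1, Real.exp (-(w (n + s) - w n))) ≤ Real.exp (δ * (n + 1))) :
    ∃ r₀ : ℝ, ∀ r ≥ r₀, (1 - ε) * r ≤ f r ∧ f r ≤ (1 + ε) * r := by
  have hε1 : 0 < min ε 1 := lt_min hε one_pos
  have hεε : min ε 1 ≤ ε := min_le_left _ _
  have hε2 : min ε 1 ≤ 1 := min_le_right _ _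
  have hδpos : 0 < δ := by rw [hδ]; positivity
  have hδκ : 0 < κ/2 - 2*δ := by rw [hδ]; nlinarith
  set g : ℝ → ℝ := fun u => Real.exp (w u - κ * u / 2) with hgdef
  have hgc : Continuous g := by
    apply Real.continuous_exp.comp
    exact hw.sub ((continuous_const.mul continuous_id).div_const 2)
  have hii : ∀ a b : ℝ, IntervalIntegrable g volume a b := fun a b => hgc.intervalIntegrable a b
  set Iinf : ℝ := ∫ u in Set.Ioi (0:ℝ), g u with hIdef
  set Af : ℝ → ℝ := fun x => ∫ u in (0:ℝ)..x, g u with hAdef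
  set T : ℝ → ℝ := fun x => Iinf - Af x with hTdef
  have hT : ∀ r : ℝ, 0 < r → T (f r) = Real.exp (-κ * r / 2) := fun r hr => hf r hr
  have hchasles : ∀ x y : ℝ, Af y - Af x = ∫ u in x..y, g u := by
    intro x y
    have := intervalIntegral.integral_add_adjacent_intervals (hii 0 x) (hii x y)
    simp only [hAdef]; linarith
  have hAlim : Tendsto Af atTop (𝓝 Iinf) :=
    intervalIntegral_tendsto_integral_Ioi 0 hint tendsto_id
  have hTnonneg : ∀ x : ℝ, 0 ≤ T x := by
    intro x
    have h1 : Tendsto (fun y => Af y - Af x) atTop (𝓝 (T x)) := hAlim.sub_const _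
    refine ge_of_tendsto h1 ?_
    filter_upwards [eventually_ge_atTop x] with y hy
    rw [hchasles x y]
    exact intervalIntegral.integral_nonneg hy fun u _ => (Real.exp_pos _).le
  have hTanti : ∀ {x y : ℝ}, x ≤ y → T y ≤ T x := by
    intro x y h
    have h1 := hchasles x y
    have h2 : 0 ≤ ∫ u in x..y, g u :=
      intervalIntegral.integral_nonneg h fun u _ => (Real.exp_pos _).le
    simp only [hTdef]; linarith
  -- key identity: exp (w u) integral over [m, m+1]
  have hIexp : ∀ m : ℕ, (∫ u in (m:ℝ)..((m:ℝ)+1), Real.exp (w u))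
      = Real.exp (w m) * ∫ s in (0:ℝ)..1, Real.exp (w (m + s) - w m) := by
    intro m
    have h1 : (∫ s in (0:ℝ)..1, Real.exp (w ((m:ℝ) + s) - w m))
        = (∫ s in (0:ℝ)..1, Real.exp (w ((m:ℝ) + s))) * Real.exp (-(w m)) := by
      rw [← intervalIntegral.integral_mul_const]
      congr 1; funext s
      rw [← Real.exp_add]; ring_nf
    have h2 : (∫ s in (0:ℝ)..1, Real.exp (w ((m:ℝ) + s)))
        = ∫ u in ((m:ℝ)+0)..((m:ℝ)+1), Real.exp (w u) := by
      exact intervalIntegral.integral_comp_add_left (fun u => Real.exp (w u)) (m:ℝ)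
    rw [h1, h2]
    rw [add_zero ((m:ℝ))]
    have he : Real.exp (w ((m:ℕ):ℝ)) * Real.exp (-(w ((m:ℕ):ℝ))) = 1 := by
      rw [← Real.exp_add]; simp
    rw [mul_left_comm, he, mul_one]
  have hJ : ∀ m : ℕ, N ≤ m →
      Real.exp (-(κ*((m:ℝ)+1)/2) - 2*δ*((m:ℝ)+1)) ≤ (∫ u in (m:ℝ)..((m:ℝ)+1), g u) ∧
      (∫ u in (m:ℝ)..((m:ℝ)+1), g u) ≤ Real.exp (2*δ*((m:ℝ)+1) - κ*(m:ℝ)/2) := by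
    intro m hm
    obtain ⟨habs, hYub, hY'ub⟩ := hN m hm
    set Y := ∫ s in (0:ℝ)..1, Real.exp (w ((m:ℝ) + s) - w m) with hYdef
    have hcont1 : Continuous fun s : ℝ => w ((m:ℝ)+s) - w m :=
      (hw.comp (continuous_const.add continuous_id)).sub continuous_const
    have hY0 : 0 ≤ Y :=
      intervalIntegral.integral_nonneg zero_le_one fun s _ => (Real.exp_pos _).le
    have hjen1 : Real.exp (∫ s in (0:ℝ)..1, (w ((m:ℝ)+s) - w m)) ≤ Y := jensen_exp _ hcont1
    have hjen2 : Real.exp (∫ s in (0:ℝ)..1, (-(w ((m:ℝ)+s) - w m)))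
        ≤ ∫ s in (0:ℝ)..1, Real.exp (-(w ((m:ℝ)+s) - w m)) := jensen_exp _ hcont1.neg
    have hintw : (∫ s in (0:ℝ)..1, (-(w ((m:ℝ)+s) - w m)))
        = - ∫ s in (0:ℝ)..1, (w ((m:ℝ)+s) - w m) := intervalIntegral.integral_neg
    have hYlow : Real.exp (-(δ*((m:ℝ)+1))) ≤ Y := by
      have h5 : Real.exp (- ∫ s in (0:ℝ)..1, (w ((m:ℝ)+s) - w m)) ≤ Real.exp (δ*((m:ℝ)+1)) := by
        rw [← hintw]
        exact hjen2.trans hY'ub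
      have h6 : -(δ*((m:ℝ)+1)) ≤ ∫ s in (0:ℝ)..1, (w ((m:ℝ)+s) - w m) := by
        have := Real.exp_le_exp.1 h5
        linarith
      exact (Real.exp_le_exp.2 h6).trans hjen1
    have habs' := abs_le.1 habs
    have hwm1 : Real.exp (w (m:ℝ)) ≤ Real.exp (δ*((m:ℝ)+1)) := Real.exp_le_exp.2 habs'.2
    have hwm2 : Real.exp (-(δ*((m:ℝ)+1))) ≤ Real.exp (w (m:ℝ)) := Real.exp_le_exp.2 habs'.1
    have hprod_low : Real.exp (-(δ*((m:ℝ)+1))) * Real.exp (-(δ*((m:ℝ)+1)))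
        ≤ Real.exp (w (m:ℝ)) * Y :=
      mul_le_mul hwm2 hYlow (Real.exp_pos _).le (Real.exp_pos _).le
    have hprod_up : Real.exp (w (m:ℝ)) * Y ≤ Real.exp (δ*((m:ℝ)+1)) * Real.exp (δ*((m:ℝ)+1)) :=
      mul_le_mul hwm1 hYub hY0 (Real.exp_pos _).le
    constructor
    · have hmono : (∫ u in (m:ℝ)..((m:ℝ)+1), Real.exp (w u) * Real.exp (-(κ*((m:ℝ)+1)/2)))
          ≤ ∫ u in (m:ℝ)..((m:ℝ)+1), g u := by
        apply intervalIntegral.integral_mono_on (by linarith)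
        · exact (((Real.continuous_exp.comp hw).mul continuous_const).intervalIntegrable _ _)
        · exact hii _ _
        · intro u hu
          rw [← Real.exp_add, hgdef]
          apply Real.exp_le_exp.2
          have := hu.2
          nlinarith
      rw [intervalIntegral.integral_mul_const, hIexp m] at hmono
      refine le_trans ?_ hmono
      have heq : Real.exp (-(κ*((m:ℝ)+1)/2) - 2*δ*((m:ℝ)+1))
          = Real.exp (-(δ*((m:ℝ)+1))) * Real.exp (-(δ*((m:ℝ)+1))) * Real.exp (-(κ*((m:ℝ)+1)/2)) := by
        rw [← Real.exp_add, ← Real.exp_add]; ring_nf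
      rw [heq]
      exact mul_le_mul_of_nonneg_right hprod_low (Real.exp_pos _).le
    · have hmono : (∫ u in (m:ℝ)..((m:ℝ)+1), g u)
          ≤ ∫ u in (m:ℝ)..((m:ℝ)+1), Real.exp (w u) * Real.exp (-(κ*(m:ℝ)/2)) := by
        apply intervalIntegral.integral_mono_on (by linarith)
        · exact hii _ _
        · exact (((Real.continuous_exp.comp hw).mul continuous_const).intervalIntegrable _ _)
        · intro u hu
          rw [← Real.exp_add, hgdef]
          apply Real.exp_le_exp.2
          have := hu.1
          nlinarith
      rw [intervalIntegral.integral_mul_const, hIexp m] at hmono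
      refine hmono.trans ?_
      have heq : Real.exp (2*δ*((m:ℝ)+1) - κ*(m:ℝ)/2)
          = Real.exp (δ*((m:ℝ)+1)) * Real.exp (δ*((m:ℝ)+1)) * Real.exp (-(κ*(m:ℝ)/2)) := by
        rw [← Real.exp_add, ← Real.exp_add]; ring_nf
      rw [heq]
      exact mul_le_mul_of_nonneg_right hprod_up (Real.exp_pos _).le
  have hTJ : ∀ m : ℕ, T ((m:ℕ):ℝ) = T (((m:ℕ):ℝ)+1) + ∫ u in ((m:ℕ):ℝ)..(((m:ℕ):ℝ)+1), g u := by
    intro m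
    have := hchasles ((m:ℕ):ℝ) (((m:ℕ):ℝ)+1)
    simp only [hTdef]
    linarith
  set q : ℝ := Real.exp (2*δ - κ/2) with hqdef
  have hq0 : 0 < q := Real.exp_pos _
  have hq1 : q < 1 := by
    rw [hqdef, Real.exp_lt_one_iff]
    linarith
  have hCpos : 0 < Real.exp (2*δ) * (1 - q)⁻¹ := by
    have : 0 < 1 - q := by linarith
    positivity
  set lC : ℝ := Real.log (Real.exp (2*δ) * (1 - q)⁻¹) with hlCdef
  have hCq : ∀ n : ℕ, Real.exp (2*δ) * (q ^ n * (1 - q)⁻¹)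
      = Real.exp (lC + (2*δ - κ/2)*(n:ℝ)) := by
    intro n
    rw [Real.exp_add, hlCdef, Real.exp_log hCpos, mul_comm (2*δ - κ/2) ((n:ℝ)),
      Real.exp_nat_mul]
    ring
  have hJq : ∀ m : ℕ, N ≤ m → (∫ u in (m:ℝ)..((m:ℝ)+1), g u) ≤ Real.exp (2*δ) * q ^ m := by
    intro m hm
    refine (hJ m hm).2.trans ?_
    rw [hqdef, ← Real.exp_nat_mul, ← Real.exp_add]
    exact Real.exp_le_exp.2 (le_of_eq (by ring))
  have hU : ∀ n : ℕ, N ≤ n → T (n:ℝ) ≤ Real.exp (2*δ) * (q ^ n * (1 - q)⁻¹) := by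
    intro n hn
    have hgeo : ∀ K : ℕ, (∑ k ∈ Finset.range K, q ^ (n + k)) ≤ q ^ n * (1-q)⁻¹ := by
      intro K
      have h1 : (∑ k ∈ Finset.range K, q ^ (n + k)) = q ^ n * ∑ k ∈ Finset.range K, q ^ k := by
        rw [Finset.mul_sum]
        exact Finset.sum_congr rfl fun k _ => pow_add q n k
      rw [h1]
      apply mul_le_mul_of_nonneg_left _ (pow_nonneg hq0.le n)
      have h2 := Summable.sum_le_tsum (Finset.range K) (fun i _ => pow_nonneg hq0.le i)
        (summable_geometric_of_lt_one hq0.le hq1)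
      rwa [tsum_geometric_of_lt_one hq0.le hq1] at h2
    have key : ∀ K : ℕ, T (n:ℝ) ≤ T ((n:ℝ) + K) + Real.exp (2*δ) * (q ^ n * (1-q)⁻¹) := by
      intro K
      have hsum := intervalIntegral.sum_integral_adjacent_intervals
        (a := fun k : ℕ => (n:ℝ) + k) (n := K) (fun k _ => hii _ _)
      have hdiff : T (n:ℝ) - T ((n:ℝ)+(K:ℝ)) = ∫ u in (n:ℝ)..((n:ℝ)+(K:ℝ)), g u := by
        simp only [hTdef]
        have := hchasles (n:ℝ) ((n:ℝ)+(K:ℝ))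
        linarith
      have hterm : ∀ k : ℕ, (∫ u in ((n:ℝ)+(k:ℝ))..((n:ℝ)+((k:ℝ)+1)), g u)
          ≤ Real.exp (2*δ) * q ^ (n+k) := by
        intro k
        have hcast : ((n:ℝ) + (k:ℝ)) = ((n+k : ℕ) : ℝ) := by push_cast; ring
        have hcast2 : ((n:ℝ) + ((k:ℝ)+1)) = ((n+k : ℕ) : ℝ) + 1 := by push_cast; ring
        rw [hcast, hcast2]
        exact hJq (n+k) (le_trans hn (Nat.le_add_right n k))
      have hsum' : (∑ k ∈ Finset.range K, ∫ u in ((n:ℝ)+(k:ℝ))..((n:ℝ)+((k:ℝ)+1)), g u)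
          = ∫ u in (n:ℝ)..((n:ℝ)+(K:ℝ)), g u := by
        push_cast at hsum
        simpa using hsum
      have hsb : (∫ u in (n:ℝ)..((n:ℝ)+(K:ℝ)), g u)
          ≤ ∑ k ∈ Finset.range K, Real.exp (2*δ) * q ^ (n+k) := by
        rw [← hsum']
        exact Finset.sum_le_sum fun k _ => hterm k
      have hsb2 : (∑ k ∈ Finset.range K, Real.exp (2*δ) * q ^ (n+k))
          ≤ Real.exp (2*δ) * (q ^ n * (1-q)⁻¹) := by
        rw [← Finset.mul_sum]
        exact mul_le_mul_of_nonneg_left (hgeo K) (Real.exp_pos _).le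
      rw [← sub_le_iff_le_add', hdiff]
      exact hsb.trans hsb2
    have h1 : Tendsto (fun K : ℕ => (n:ℝ) + (K:ℝ)) atTop atTop :=
      tendsto_atTop_add_const_left _ _ tendsto_natCast_atTop_atTop
    have h3 : Tendsto (fun K : ℕ => T ((n:ℝ)+(K:ℝ))) atTop (𝓝 (Iinf - Iinf)) :=
      tendsto_const_nhds.sub (hAlim.comp h1)
    rw [sub_self] at h3
    have h4 := h3.add (tendsto_const_nhds (x := Real.exp (2*δ) * (q ^ n * (1-q)⁻¹)))
    rw [zero_add] at h4
    exact ge_of_tendsto h4 (Eventually.of_forall key)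
  have hc1pos : 0 < T (((N+1:ℕ)):ℝ) := by
    have h6 := (hJ (N+1) (Nat.le_succ N)).1
    have h7 := hTJ (N+1)
    have h8 := hTnonneg ((((N+1:ℕ)):ℝ)+1)
    have h9 := Real.exp_pos (-(κ*(((N+1:ℕ):ℝ)+1)/2) - 2*δ*(((N+1:ℕ):ℝ)+1))
    linarith
  -- eventual conditions on r
  have hev1 : ∀ᶠ r : ℝ in atTop, 1 ≤ r := eventually_ge_atTop 1
  have hev2 : ∀ᶠ r : ℝ in atTop, Real.exp (-κ*r/2) < T (((N+1:ℕ)):ℝ) := by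
    have hm : Tendsto (fun r : ℝ => κ/2 * r) atTop atTop :=
      Tendsto.const_mul_atTop (by positivity) tendsto_id
    have h1 : Tendsto (fun r : ℝ => -κ*r/2) atTop atBot := by
      have := tendsto_neg_atTop_atBot.comp hm
      apply this.congr
      intro r
      simp only [Function.comp]
      ring
    exact ((Real.tendsto_exp_atBot.comp h1).eventually_lt_const hc1pos)
  have haU : 0 < (κ/2 - 2*δ)*(1+ε) - κ/2 := by
    rw [hδ]
    nlinarith [mul_pos hκ hε, mul_le_mul_of_nonneg_left hεε hκ.le,
      mul_le_mul_of_nonneg_left hε2 (mul_nonneg hκ.le hε.le),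
      mul_pos (mul_pos hκ hε1) hε]
  have haL : 0 < κ/2 - (κ/2 + 2*δ)*(1-ε) := by
    rw [hδ]
    nlinarith [mul_pos hκ hε, mul_le_mul_of_nonneg_left hεε hκ.le,
      mul_le_mul_of_nonneg_left hε2 (mul_nonneg hκ.le hε.le),
      mul_pos (mul_pos hκ hε1) hε]
  have hev3 : ∀ᶠ r : ℝ in atTop, lC + (κ/2 - 2*δ) + κ*r/2 ≤ (κ/2 - 2*δ) * ((1+ε)*r) := by
    filter_upwards [eventually_ge_atTop ((lC + (κ/2 - 2*δ)) / ((κ/2 - 2*δ)*(1+ε) - κ/2))]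
      with r hr
    rw [div_le_iff₀ haU] at hr
    nlinarith [hr]
  have hev4 : ∀ᶠ r : ℝ in atTop, (κ/2 + 2*δ) * ((1-ε)*r + 2) ≤ κ*r/2 := by
    filter_upwards [eventually_ge_atTop (((κ/2 + 2*δ)*2) / (κ/2 - (κ/2 + 2*δ)*(1-ε)))]
      with r hr
    rw [div_le_iff₀ haL] at hr
    nlinarith [hr]
  obtain ⟨r₀, hr₀⟩ := eventually_atTop.1 ((hev1.and (hev2.and (hev3.and hev4))))
  refine ⟨r₀, fun r hr => ?_⟩
  obtain ⟨h1r, h2r, h3r, h4r⟩ := hr₀ r hr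
  have hrpos : 0 < r := lt_of_lt_of_le one_pos h1r
  have hTx := hT r hrpos
  set x := f r with hxdef
  have hx1 : ((N+1:ℕ):ℝ) < x := by
    by_contra hcon
    push_neg at hcon
    have h5 := hTanti hcon
    rw [hTx] at h5
    linarith
  have hxpos : 0 ≤ x := le_trans (by positivity) hx1.le
  -- upper bound
  have hfl1 : ((⌊x⌋₊:ℕ):ℝ) ≤ x := Nat.floor_le hxpos
  have hfl2 : x < (⌊x⌋₊:ℝ) + 1 := Nat.lt_floor_add_one x
  have hflN : N ≤ ⌊x⌋₊ := by
    have h5 : (N+1:ℕ) ≤ ⌊x⌋₊ := Nat.le_floor (le_of_lt hx1)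
    omega
  have hchain : Real.exp (-κ*r/2) ≤ Real.exp (lC + (2*δ - κ/2)*((⌊x⌋₊:ℕ):ℝ)) := by
    rw [← hTx, ← hCq ⌊x⌋₊]
    exact (hTanti hfl1).trans (hU ⌊x⌋₊ hflN)
  have hlin := Real.exp_le_exp.1 hchain
  have hxu : x ≤ (1+ε)*r := by
    have hmul : (κ/2 - 2*δ) * (((⌊x⌋₊:ℕ):ℝ)+1) ≤ (κ/2 - 2*δ) * ((1+ε)*r) := by
      nlinarith [hlin, h3r]
    have h6 := (mul_le_mul_iff_right₀ hδκ).1 hmul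
    linarith
  -- lower bound
  have hcl1 : x ≤ ((⌈x⌉₊:ℕ):ℝ) := Nat.le_ceil x
  have hcl2 : ((⌈x⌉₊:ℕ):ℝ) < x + 1 := Nat.ceil_lt_add_one hxpos
  have hclN : N ≤ ⌈x⌉₊ := by
    have h5 : ((N:ℕ):ℝ) < ((⌈x⌉₊:ℕ):ℝ) := by
      push_cast at hx1 ⊢
      linarith
    exact_mod_cast h5.le
  have hchain2 : Real.exp (-(κ*(((⌈x⌉₊:ℕ):ℝ)+1)/2) - 2*δ*(((⌈x⌉₊:ℕ):ℝ)+1))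
      ≤ Real.exp (-κ*r/2) := by
    rw [← hTx]
    refine le_trans ?_ (hTanti hcl1)
    have h6 := (hJ ⌈x⌉₊ hclN).1
    have h7 := hTJ ⌈x⌉₊
    have h8 := hTnonneg (((⌈x⌉₊:ℕ):ℝ)+1)
    rw [h7]
    exact h6.trans (le_add_of_nonneg_left h8)
  have hlin2 := Real.exp_le_exp.1 hchain2
  have hxl : (1-ε)*r ≤ x := by
    have h9 : (κ/2 + 2*δ) * ((1-ε)*r + 2) ≤ (κ/2 + 2*δ)*(((⌈x⌉₊:ℕ):ℝ)+1) := by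
      nlinarith [hlin2, h4r]
    have h10 := (mul_le_mul_iff_right₀ (by linarith : (0:ℝ) < κ/2 + 2*δ)).1 h9
    linarith
  exact ⟨hxl, hxu⟩


/-- A (two-sided, when indexed by all of `ℝ`) standard Brownian motion:
continuous paths, `W 0 = 0`, increments `W t - W s` Gaussian `N(0, t-s)` for `s ≤ t`,
and independent increments along any monotone sequence of times. -/
def IsBrownianMotion {Ω : Type*} [MeasureSpace Ω] (W : ℝ → Ω → ℝ) : Prop :=
  (∀ ω, W 0 ω = 0) ∧
  (∀ ω, Continuous fun t => W t ω) ∧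
  (∀ s t : ℝ, s ≤ t →
    Measure.map (fun ω => W t ω - W s ω) ℙ = gaussianReal 0 (Real.toNNReal (t - s))) ∧
  (∀ (n : ℕ) (t : ℕ → ℝ), Monotone t →
    iIndepFun
      (fun i : Fin n => fun ω => W (t (i + 1)) ω - W (t i) ω) ℙ)

/-- In the setting of Lemma 2.1 (`F` defined by
`A_∞ - A(F(r)) = e^{-κr/2}`), for every `ε > 0`, almost surely, for all large `r`,
`(1-ε) r ≤ F(r) ≤ (1+ε) r`. -/
theorem stmt10 {Ω : Type*} [MeasureSpace Ω] [IsProbabilityMeasure (ℙ : Measure Ω)]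
    (W : ℝ → Ω → ℝ) (hW : IsBrownianMotion W) (κ : ℝ) (hκ : 0 < κ)
    (A : ℝ → Ω → ℝ) (hA : ∀ x ω, A x ω = ∫ u in (0:ℝ)..x, Real.exp (W u ω - κ * u / 2))
    (Ainf : Ω → ℝ)
    (hAinf : ∀ ω, Ainf ω = ∫ u in Set.Ioi (0:ℝ), Real.exp (W u ω - κ * u / 2))
    (hfin : ∀ᵐ ω ∂ℙ, IntegrableOn (fun u => Real.exp (W u ω - κ * u / 2)) (Set.Ioi 0))
    (F : ℝ → Ω → ℝ) (hF : ∀ r : ℝ, 0 < r → ∀ ω, Ainf ω - A (F r ω) ω = Real.exp (-κ * r / 2))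
    (ε : ℝ) (hε : 0 < ε) :
    ∀ᵐ ω ∂ℙ, ∃ r₀ : ℝ, ∀ r ≥ r₀, (1 - ε) * r ≤ F r ω ∧ F r ω ≤ (1 + ε) * r := by
  obtain ⟨hW0, hWc, hWmap, -⟩ := hW
  set δ : ℝ := κ * min ε 1 / 16 with hδdef
  have hδpos : 0 < δ := by
    have : 0 < min ε 1 := lt_min hε one_pos
    positivity
  -- a.e. measurability of W t for each t
  have haem : ∀ t : ℝ, AEMeasurable (fun ω => W t ω) ℙ := by
    intro t
    rcases le_or_gt 0 t with ht | ht
    · have hmap := hWmap 0 t ht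
      have haem' : AEMeasurable (fun ω => W t ω - W 0 ω) ℙ := by
        by_contra h
        rw [Measure.map_of_not_aemeasurable h] at hmap
        exact (IsProbabilityMeasure.ne_zero (gaussianReal 0 _)) hmap.symm
      have : (fun ω => W t ω - W 0 ω) = fun ω => W t ω := by
        funext ω; rw [hW0 ω, sub_zero]
      rwa [this] at haem'
    · have hmap := hWmap t 0 ht.le
      have haem' : AEMeasurable (fun ω => W 0 ω - W t ω) ℙ := by
        by_contra h
        rw [Measure.map_of_not_aemeasurable h] at hmap
        exact (IsProbabilityMeasure.ne_zero (gaussianReal 0 _)) hmap.symm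
      have : (fun ω => -(W 0 ω - W t ω)) = fun ω => W t ω := by
        funext ω; rw [hW0 ω, zero_sub, neg_neg]
      rw [← this]
      exact haem'.neg
  -- measurable modification
  obtain ⟨V, NN, hNNm, hNN0, hVW, hVm⟩ := exists_mod W hWc (fun q => haem (q:ℝ))
  have hNae : ∀ᵐ ω ∂ℙ, ω ∉ NN := by
    rw [ae_iff]
    simpa using hNN0
  -- increments at integer times
  have hmapincr : ∀ (n : ℕ) (s : ℝ), 0 < s →
      Measure.map (fun ω => W ((n:ℝ) + s) ω - W (n:ℝ) ω) ℙ
        = gaussianReal 0 (Real.toNNReal s) := by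
    intro n s hs
    have := hWmap (n:ℝ) ((n:ℝ) + s) (by linarith)
    rwa [show (n:ℝ) + s - (n:ℝ) = s by ring] at this
  have hmapn : ∀ n : ℕ,
      Measure.map (fun ω => W (n:ℝ) ω) ℙ = gaussianReal 0 (Real.toNNReal (n:ℝ)) := by
    intro n
    have h := hWmap 0 (n:ℝ) (Nat.cast_nonneg n)
    rw [show (fun ω => W (n:ℝ) ω - W 0 ω) = fun ω => W (n:ℝ) ω from
      funext fun ω => by rw [hW0 ω, sub_zero], sub_zero] at h
    exact h
  -- the ENNReal-valued integrals
  set Zp : ℕ → Ω → ℝ≥0∞ := fun n ω =>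
    ∫⁻ s in Set.Ioc (0:ℝ) 1, ENNReal.ofReal (Real.exp (V ((n:ℝ)+s) ω - V (n:ℝ) ω)) with hZp
  set Zm : ℕ → Ω → ℝ≥0∞ := fun n ω =>
    ∫⁻ s in Set.Ioc (0:ℝ) 1, ENNReal.ofReal (Real.exp (-(V ((n:ℝ)+s) ω - V (n:ℝ) ω))) with hZm
  have hkerm : ∀ (n : ℕ) (l : ℝ), Measurable fun p : Ω × ℝ =>
      ENNReal.ofReal (Real.exp (l * (V ((n:ℝ)+p.2) p.1 - V (n:ℝ) p.1))) := by
    intro n l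
    have h1 : Measurable fun p : Ω × ℝ => V ((n:ℝ)+p.2) p.1 :=
      hVm.comp ((measurable_const.add measurable_snd).prodMk measurable_fst)
    have h2 : Measurable fun p : Ω × ℝ => V (n:ℝ) p.1 :=
      hVm.comp (measurable_const.prodMk measurable_fst)
    exact (Real.measurable_exp.comp ((h1.sub h2).const_mul l)).ennreal_ofReal
  have hZpm : ∀ n, Measurable (Zp n) := by
    intro n
    have := (hkerm n 1).lintegral_prod_right' (ν := volume.restrict (Set.Ioc 0 1))
    simpa [hZp, one_mul] using this
  have hZmm : ∀ n, Measurable (Zm n) := by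
    intro n
    have := (hkerm n (-1)).lintegral_prod_right' (ν := volume.restrict (Set.Ioc 0 1))
    simpa [hZm, neg_one_mul] using this
  -- bound on the expectation of Zp/Zm
  have hZbound : ∀ (n : ℕ) (l : ℝ), l = 1 ∨ l = -1 →
      (∫⁻ ω, ∫⁻ s in Set.Ioc (0:ℝ) 1,
        ENNReal.ofReal (Real.exp (l * (V ((n:ℝ)+s) ω - V (n:ℝ) ω))) ∂ℙ)
        ≤ ENNReal.ofReal (Real.exp (1/2)) := by
    intro n l hl
    rw [lintegral_lintegral_swap ((hkerm n l).aemeasurable)]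
    have hinner : ∀ s ∈ Set.Ioc (0:ℝ) 1,
        (∫⁻ ω, ENNReal.ofReal (Real.exp (l * (V ((n:ℝ)+s) ω - V (n:ℝ) ω))) ∂ℙ)
          ≤ ENNReal.ofReal (Real.exp (1/2)) := by
      intro s hs
      have hcongr : (∫⁻ ω, ENNReal.ofReal (Real.exp (l * (V ((n:ℝ)+s) ω - V (n:ℝ) ω))) ∂ℙ)
          = ∫⁻ ω, ENNReal.ofReal (Real.exp (l * (W ((n:ℝ)+s) ω - W (n:ℝ) ω))) ∂ℙ := by
        refine lintegral_congr_ae (hNae.mono fun ω hω => ?_)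
        simp only [hVW ω hω]
      rw [hcongr, lint_mgf_map _ _ (hmapincr n s hs.1) l]
      apply ENNReal.ofReal_le_ofReal
      apply Real.exp_le_exp.2
      have hcoe : ((Real.toNNReal s : ℝ≥0) : ℝ) = s := Real.coe_toNNReal s hs.1.le
      rw [hcoe]
      have hl2 : l ^ 2 = 1 := by rcases hl with h | h <;> rw [h] <;> norm_num
      rw [hl2]
      linarith [hs.2]
    calc (∫⁻ s in Set.Ioc (0:ℝ) 1,
          ∫⁻ ω, ENNReal.ofReal (Real.exp (l * (V ((n:ℝ)+s) ω - V (n:ℝ) ω))) ∂ℙ)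
        ≤ ∫⁻ _s in Set.Ioc (0:ℝ) 1, ENNReal.ofReal (Real.exp (1/2)) := by
          apply setLIntegral_mono' measurableSet_Ioc hinner
      _ = ENNReal.ofReal (Real.exp (1/2)) := by
          rw [setLIntegral_const, Real.volume_Ioc]
          norm_num
  -- the bad events
  set B1 : ℕ → Set Ω := fun n => {ω | δ*((n:ℝ)+1) ≤ W (n:ℝ) ω} with hB1
  set B2 : ℕ → Set Ω := fun n => {ω | δ*((n:ℝ)+1) ≤ -(W (n:ℝ) ω)} with hB2
  set B3 : ℕ → Set Ω := fun n => {ω | ENNReal.ofReal (Real.exp (δ*((n:ℝ)+1))) ≤ Zp n ω} with hB3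
  set B4 : ℕ → Set Ω := fun n => {ω | ENNReal.ofReal (Real.exp (δ*((n:ℝ)+1))) ≤ Zm n ω} with hB4
  have hB1bd : ∀ n : ℕ, ℙ (B1 n) ≤ ENNReal.ofReal (Real.exp (δ^2*(n:ℝ)/2 - δ*(δ*((n:ℝ)+1)))) := by
    intro n
    have hch := chernoff (fun ω => W (n:ℝ) ω) (Real.toNNReal (n:ℝ)) (hmapn n) δ (δ*(δ*((n:ℝ)+1)))
    have hset : B1 n = {ω | δ*(δ*((n:ℝ)+1)) ≤ δ * W (n:ℝ) ω} := by
      ext ω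
      simp only [hB1, Set.mem_setOf_eq]
      exact (mul_le_mul_iff_right₀ hδpos).symm
    rw [hset]
    refine hch.trans (le_of_eq ?_)
    congr 1
    rw [Real.coe_toNNReal _ (Nat.cast_nonneg n)]
  have hB2bd : ∀ n : ℕ, ℙ (B2 n) ≤ ENNReal.ofReal (Real.exp (δ^2*(n:ℝ)/2 - δ*(δ*((n:ℝ)+1)))) := by
    intro n
    have hch := chernoff (fun ω => W (n:ℝ) ω) (Real.toNNReal (n:ℝ)) (hmapn n) (-δ) (δ*(δ*((n:ℝ)+1)))
    have hset : B2 n = {ω | δ*(δ*((n:ℝ)+1)) ≤ (-δ) * W (n:ℝ) ω} := by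
      ext ω
      simp only [hB2, Set.mem_setOf_eq]
      rw [show (-δ) * W (n:ℝ) ω = δ * (-(W (n:ℝ) ω)) by ring]
      exact (mul_le_mul_iff_right₀ hδpos).symm
    rw [hset]
    refine hch.trans (le_of_eq ?_)
    congr 1
    rw [Real.coe_toNNReal _ (Nat.cast_nonneg n)]
    ring
  have hB3bd : ∀ n : ℕ, ℙ (B3 n) ≤ ENNReal.ofReal (Real.exp (1/2 - δ*((n:ℝ)+1))) := by
    intro n
    apply markov_ofReal (Zp n) (hZpm n).aemeasurable (1/2) _ (δ*((n:ℝ)+1))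
    have := hZbound n 1 (Or.inl rfl)
    simpa [hZp, one_mul] using this
  have hB4bd : ∀ n : ℕ, ℙ (B4 n) ≤ ENNReal.ofReal (Real.exp (1/2 - δ*((n:ℝ)+1))) := by
    intro n
    apply markov_ofReal (Zm n) (hZmm n).aemeasurable (1/2) _ (δ*((n:ℝ)+1))
    have := hZbound n (-1) (Or.inr rfl)
    simpa [hZm, neg_one_mul] using this
  set B : ℕ → Set Ω := fun n => (B1 n ∪ B2 n) ∪ (B3 n ∪ B4 n) with hB
  have hsummable : (∑' n, ℙ (B n)) ≠ ⊤ := by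
    have hgeo1 : Summable fun n : ℕ => Real.exp (δ^2*(n:ℝ)/2 - δ*(δ*((n:ℝ)+1))) := by
      have heq : ∀ n : ℕ, Real.exp (δ^2*(n:ℝ)/2 - δ*(δ*((n:ℝ)+1)))
          = Real.exp (-(δ^2)) * (Real.exp (-(δ^2)/2)) ^ n := by
        intro n
        rw [← Real.exp_nat_mul, ← Real.exp_add]
        congr 1
        ring
      have := (summable_geometric_of_lt_one (r := Real.exp (-(δ^2)/2)) (Real.exp_pos _).le
        (by rw [Real.exp_lt_one_iff]; nlinarith [pow_pos hδpos 2])).mul_left (Real.exp (-(δ^2)))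
      · exact this.congr fun n => (heq n).symm
    have hgeo2 : Summable fun n : ℕ => Real.exp (1/2 - δ*((n:ℝ)+1)) := by
      have heq : ∀ n : ℕ, Real.exp (1/2 - δ*((n:ℝ)+1))
          = Real.exp (1/2 - δ) * (Real.exp (-δ)) ^ n := by
        intro n
        rw [← Real.exp_nat_mul, ← Real.exp_add]
        congr 1
        ring
      have := (summable_geometric_of_lt_one (r := Real.exp (-δ)) (Real.exp_pos _).le
        (by rw [Real.exp_lt_one_iff]; linarith)).mul_left (Real.exp (1/2 - δ))
      · exact this.congr fun n => (heq n).symm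
    have hBle : ∀ n : ℕ, ℙ (B n) ≤
        (ENNReal.ofReal (Real.exp (δ^2*(n:ℝ)/2 - δ*(δ*((n:ℝ)+1))))
          + ENNReal.ofReal (Real.exp (δ^2*(n:ℝ)/2 - δ*(δ*((n:ℝ)+1)))))
        + (ENNReal.ofReal (Real.exp (1/2 - δ*((n:ℝ)+1)))
          + ENNReal.ofReal (Real.exp (1/2 - δ*((n:ℝ)+1)))) := by
      intro n
      refine (measure_union_le _ _).trans ?_
      gcongr
      · exact (measure_union_le _ _).trans (add_le_add (hB1bd n) (hB2bd n))
      · exact (measure_union_le _ _).trans (add_le_add (hB3bd n) (hB4bd n))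
    refine ne_top_of_le_ne_top ?_ (ENNReal.tsum_le_tsum hBle)
    rw [ENNReal.tsum_add, ENNReal.tsum_add, ENNReal.tsum_add]
    rw [← ENNReal.ofReal_tsum_of_nonneg (fun n => (Real.exp_pos _).le) hgeo1,
      ← ENNReal.ofReal_tsum_of_nonneg (fun n => (Real.exp_pos _).le) hgeo2]
    simp [ENNReal.ofReal_ne_top]
  have hBC := ae_eventually_notMem hsummable
  -- combine all a.e. facts
  filter_upwards [hfin, hNae, hBC] with ω hfinω hωN hBCω
  obtain ⟨N₀, hN₀⟩ := eventually_atTop.1 hBCω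
  have hVWω : ∀ t, V t ω = W t ω := hVW ω hωN
  -- verify hypotheses of det_lemma for the path of ω
  apply det_lemma (fun t => W t ω) (hWc ω) κ ε δ hκ hε hδdef hfinω (fun r => F r ω)
    (fun r hr => by rw [← hA, ← hAinf]; exact hF r hr ω) N₀
  intro n hn
  have hnB := hN₀ n hn
  simp only [hB, Set.mem_union, not_or] at hnB
  obtain ⟨⟨h1, h2⟩, h3, h4⟩ := hnB
  simp only [hB1, Set.mem_setOf_eq, not_le] at h1
  simp only [hB2, Set.mem_setOf_eq, not_le] at h2
  simp only [hB3, Set.mem_setOf_eq, not_le] at h3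
  simp only [hB4, Set.mem_setOf_eq, not_le] at h4
  have hWcont : Continuous fun s : ℝ => W ((n:ℝ) + s) ω - W (n:ℝ) ω :=
    ((hWc ω).comp (continuous_const.add continuous_id)).sub continuous_const
  -- convert Zp/Zm strict bounds to interval integral bounds
  have hYp : (∫ s in (0:ℝ)..1, Real.exp (W ((n:ℝ) + s) ω - W (n:ℝ) ω))
      ≤ Real.exp (δ*((n:ℝ)+1)) := by
    have hZeq : Zp n ω = ENNReal.ofReal (∫ s in (0:ℝ)..1, Real.exp (W ((n:ℝ) + s) ω - W (n:ℝ) ω)) := by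
      rw [intervalIntegral.integral_of_le zero_le_one, hZp]
      simp only [hVWω]
      rw [ofReal_integral_eq_lintegral_ofReal]
      · exact (Real.continuous_exp.comp hWcont).integrableOn_Ioc
      · exact Eventually.of_forall fun s => (Real.exp_pos _).le
    rw [hZeq] at h3
    exact le_of_lt ((ENNReal.ofReal_lt_ofReal_iff (Real.exp_pos _)).1 h3)
  have hYm : (∫ s in (0:ℝ)..1, Real.exp (-(W ((n:ℝ) + s) ω - W (n:ℝ) ω)))
      ≤ Real.exp (δ*((n:ℝ)+1)) := by
    have hZeq : Zm n ω = ENNReal.ofReal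
        (∫ s in (0:ℝ)..1, Real.exp (-(W ((n:ℝ) + s) ω - W (n:ℝ) ω))) := by
      rw [intervalIntegral.integral_of_le zero_le_one, hZm]
      simp only [hVWω]
      rw [ofReal_integral_eq_lintegral_ofReal]
      · exact (Real.continuous_exp.comp hWcont.neg).integrableOn_Ioc
      · exact Eventually.of_forall fun s => (Real.exp_pos _).le
    rw [hZeq] at h4
    exact le_of_lt ((ENNReal.ofReal_lt_ofReal_iff (Real.exp_pos _)).1 h4)
  exact ⟨abs_le.2 ⟨by linarith, h1.le⟩, hYp, hYm⟩
end

section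
/- Let β̂ be a standard Brownian motion and Y a Jacobi process of dimension (2, 2+2κ) starting from 0, i.e., the solution of dY(t) = 2√(Y(t)(1−Y(t))) dβ̂(t) + [2 − (4+2κ)Y(t)] dt with Y(0) = 0, taking values in [0,1]. Set α_κ = 1/(4+2κ) and T_Y(α_κ) = inf{t > 0 : Y(t) = α_κ}. Then for every t ≥ 2α_κ, P(T_Y(α_κ) > t) ≤ 2 exp(−t/32). -/
open MeasureTheory ProbabilityTheory Real Filter

theorem measInt' {Ω : Type*} [MeasureSpace Ω]
    (ℱ : Filtration ℝ (inferInstance : MeasurableSpace Ω)) (Y : ℝ → Ω → ℝ)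
    (hadap : Adapted ℱ Y) (hcont : ∀ ω, Continuous fun t => Y t ω)
    (g : ℝ → ℝ) (hg : Continuous g) (s : ℝ) (hs : 0 ≤ s) :
    StronglyMeasurable[ℱ s] fun ω => ∫ u in (0:ℝ)..s, g (Y u ω) := by
  have h1 : @StronglyMeasurable (ℝ × Ω) ℝ _ (@Prod.instMeasurableSpace _ _ _ (ℱ s))
      (Function.uncurry fun (u : ℝ) (ω : Ω) => g (Y (min u s) ω)) := by
    apply @stronglyMeasurable_uncurry_of_continuous_of_stronglyMeasurable Ω ℝ ℝ _ _ _ _ _ _ _ (ℱ s)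
    · intro ω
      exact hg.comp ((hcont ω).comp (continuous_id.min continuous_const))
    · intro u
      exact hg.comp_stronglyMeasurable ((hadap (min u s)).stronglyMeasurable.mono (ℱ.mono (min_le_right u s)))
  have h2 : StronglyMeasurable[ℱ s]
      (fun ω => ∫ u in Set.Ioc (0:ℝ) s, g (Y (min u s) ω)) :=
    @MeasureTheory.StronglyMeasurable.integral_prod_left ℝ Ω ℝ _ (ℱ s)
      ((volume : Measure ℝ).restrict (Set.Ioc 0 s)) _ _ _ _ h1
  have h3 : (fun ω => ∫ u in Set.Ioc (0:ℝ) s, g (Y (min u s) ω))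
      = fun ω => ∫ u in (0:ℝ)..s, g (Y u ω) := by
    funext ω
    rw [intervalIntegral.integral_of_le hs]
    exact setIntegral_congr_fun measurableSet_Ioc fun u hu => by rw [min_eq_left hu.2]
  rwa [h3] at h2

theorem bddInt12 {Ω : Type*} [MeasureSpace Ω] [IsProbabilityMeasure (ℙ : Measure Ω)]
    (f : Ω → ℝ) (C : ℝ) (hm : StronglyMeasurable f) (hb : ∀ ω, |f ω| ≤ C) :
    Integrable f ℙ :=
  (integrable_const C).mono' hm.aestronglyMeasurable
    (ae_of_all _ fun ω => by simpa [Real.norm_eq_abs] using hb ω)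

theorem oneStep12 {Ω : Type*} [MeasureSpace Ω] [IsProbabilityMeasure (ℙ : Measure Ω)]
    (ℱ : Filtration ℝ (inferInstance : MeasurableSpace Ω)) (s₀ : ℝ)
    (Ms Mt Vs Vt : Ω → ℝ) (cs ct cv : ℝ)
    (hcs0 : 0 ≤ cs) (hct0 : 0 ≤ ct)
    (hMsm : StronglyMeasurable[ℱ s₀] Ms)
    (hMtm : StronglyMeasurable Mt)
    (hVsm : StronglyMeasurable Vs)
    (hVtm : StronglyMeasurable Vt)
    (hMsb : ∀ ω, |Ms ω| ≤ cs) (hMtb : ∀ ω, |Mt ω| ≤ ct)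
    (hVsb : ∀ ω, |Vs ω| ≤ cv) (hVtb : ∀ ω, |Vt ω| ≤ cv)
    (hVd : ∀ ω, 0 ≤ Vt ω - Vs ω ∧ Vt ω - Vs ω ≤ 8)
    (hmart : ℙ[Mt|ℱ s₀] =ᵐ[ℙ] Ms)
    (hqv : ℙ[fun ω => Mt ω ^ 2 - Vt ω|ℱ s₀] =ᵐ[ℙ] fun ω => Ms ω ^ 2 - Vs ω)
    (B : Set Ω) (hB : MeasurableSet[ℱ s₀] B) :
    ℙ (B ∩ {ω | Mt ω - Ms ω ≤ -4}) ≤ ℙ B / 2 := by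
  have hMssm : StronglyMeasurable Ms := hMsm.mono (ℱ.le s₀)
  have hBm : MeasurableSet B := ℱ.le s₀ _ hB
  have hAm : MeasurableSet {ω | Mt ω - Ms ω ≤ -4} :=
    measurableSet_le (hMtm.measurable.sub hMssm.measurable) measurable_const
  have hDm : MeasurableSet (B ∩ {ω | Mt ω - Ms ω ≤ -4}) := hBm.inter hAm
  -- integrability
  have hiMt : Integrable Mt ℙ := bddInt12 _ ct hMtm hMtb
  have hiMM : Integrable (fun ω => Ms ω * Mt ω) ℙ := by
    apply bddInt12 _ (cs * ct) (hMssm.mul hMtm)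
    intro ω
    calc |Ms ω * Mt ω| = |Ms ω| * |Mt ω| := abs_mul _ _
      _ ≤ cs * ct := mul_le_mul (hMsb ω) (hMtb ω) (abs_nonneg _) hcs0
  have hiMsq : Integrable (fun ω => Ms ω * Ms ω) ℙ := by
    apply bddInt12 _ (cs * cs) (hMssm.mul hMssm)
    intro ω
    calc |Ms ω * Ms ω| = |Ms ω| * |Ms ω| := abs_mul _ _
      _ ≤ cs * cs := mul_le_mul (hMsb ω) (hMsb ω) (abs_nonneg _) hcs0
  have hiQt : Integrable (fun ω => Mt ω ^ 2 - Vt ω) ℙ := by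
    apply bddInt12 _ (ct * ct + cv) ((hMtm.pow 2).sub hVtm)
    intro ω
    have h1 : |Mt ω ^ 2| ≤ ct * ct := by
      rw [abs_pow, pow_two]
      exact mul_le_mul (hMtb ω) (hMtb ω) (abs_nonneg _) hct0
    calc |Mt ω ^ 2 - Vt ω| ≤ |Mt ω ^ 2| + |Vt ω| := abs_sub _ _
      _ ≤ ct * ct + cv := add_le_add h1 (hVtb ω)
  have hiQs : Integrable (fun ω => Ms ω ^ 2 - Vs ω) ℙ := by
    apply bddInt12 _ (cs * cs + cv) ((hMssm.pow 2).sub hVsm)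
    intro ω
    have h1 : |Ms ω ^ 2| ≤ cs * cs := by
      rw [abs_pow, pow_two]
      exact mul_le_mul (hMsb ω) (hMsb ω) (abs_nonneg _) hcs0
    calc |Ms ω ^ 2 - Vs ω| ≤ |Ms ω ^ 2| + |Vs ω| := abs_sub _ _
      _ ≤ cs * cs + cv := add_le_add h1 (hVsb ω)
  have hiVd : Integrable (fun ω => Vt ω - Vs ω) ℙ := by
    apply bddInt12 _ (cv + cv) (hVtm.sub hVsm)
    intro ω
    calc |Vt ω - Vs ω| ≤ |Vt ω| + |Vs ω| := abs_sub _ _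
      _ ≤ cv + cv := add_le_add (hVtb ω) (hVsb ω)
  have hiSq : Integrable (fun ω => (Mt ω - Ms ω) ^ 2) ℙ := by
    apply bddInt12 _ ((ct + cs) * (ct + cs)) ((hMtm.sub hMssm).pow 2)
    intro ω
    have h1 : |Mt ω - Ms ω| ≤ ct + cs :=
      (abs_sub _ _).trans (add_le_add (hMtb ω) (hMsb ω))
    show |(Mt ω - Ms ω) ^ 2| ≤ (ct + cs) * (ct + cs)
    rw [abs_pow, pow_two]
    exact mul_le_mul h1 h1 (abs_nonneg _) (by linarith [abs_nonneg (Mt ω - Ms ω)])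
  -- (i)
  have heq1 : ∫ ω in B, Ms ω * Mt ω ∂ℙ = ∫ ω in B, Ms ω * Ms ω ∂ℙ := by
    have hgm : StronglyMeasurable[ℱ s₀] (B.indicator Ms) := hMsm.indicator hB
    have hgbd : ∀ ω, |B.indicator Ms ω| ≤ cs := by
      intro ω
      by_cases h : ω ∈ B
      · rw [Set.indicator_of_mem h]; exact hMsb ω
      · rw [Set.indicator_of_notMem h, abs_zero]; exact hcs0
    have hpull := condExp_stronglyMeasurable_mul_of_bound (ℱ.le s₀) hgm hiMt cs
      (ae_of_all _ fun ω => by rw [Real.norm_eq_abs]; exact hgbd ω)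
    have h2 : ℙ[(B.indicator Ms) * Mt|ℱ s₀] =ᵐ[ℙ] fun ω => B.indicator Ms ω * Ms ω := by
      filter_upwards [hpull, hmart] with ω h1 h2
      rw [h1, Pi.mul_apply, h2]
    have higMt : Integrable ((B.indicator Ms) * Mt) ℙ := by
      apply bddInt12 _ (cs * ct) ((hgm.mono (ℱ.le s₀)).mul hMtm)
      intro ω
      calc |(B.indicator Ms * Mt) ω| = |B.indicator Ms ω| * |Mt ω| := abs_mul _ _
        _ ≤ cs * ct := mul_le_mul (hgbd ω) (hMtb ω) (abs_nonneg _) hcs0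
    have h3 : ∫ ω, (B.indicator Ms * Mt) ω ∂ℙ = ∫ ω, B.indicator Ms ω * Ms ω ∂ℙ := by
      calc ∫ ω, (B.indicator Ms * Mt) ω ∂ℙ
          = ∫ ω, (ℙ[B.indicator Ms * Mt|ℱ s₀]) ω ∂ℙ := (integral_condExp (ℱ.le s₀)).symm
        _ = ∫ ω, B.indicator Ms ω * Ms ω ∂ℙ := integral_congr_ae h2
    have h4 : ∫ ω, (B.indicator Ms * Mt) ω ∂ℙ = ∫ ω in B, Ms ω * Mt ω ∂ℙ := by
      rw [← integral_indicator hBm]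
      congr 1
      funext ω
      by_cases h : ω ∈ B
      · rw [Pi.mul_apply, Set.indicator_of_mem h, Set.indicator_of_mem h]
      · rw [Pi.mul_apply, Set.indicator_of_notMem h, Set.indicator_of_notMem h, zero_mul]
    have h5 : ∫ ω, B.indicator Ms ω * Ms ω ∂ℙ = ∫ ω in B, Ms ω * Ms ω ∂ℙ := by
      rw [← integral_indicator hBm]
      congr 1
      funext ω
      by_cases h : ω ∈ B
      · rw [Set.indicator_of_mem h, Set.indicator_of_mem h]
      · rw [Set.indicator_of_notMem h, Set.indicator_of_notMem h, zero_mul]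
    rw [← h4, h3, h5]
  -- (ii)
  have heq2 : ∫ ω in B, (Mt ω ^ 2 - Vt ω) ∂ℙ = ∫ ω in B, (Ms ω ^ 2 - Vs ω) ∂ℙ := by
    have h1 := setIntegral_condExp (ℱ.le s₀) hiQt hB
    calc ∫ ω in B, (Mt ω ^ 2 - Vt ω) ∂ℙ
        = ∫ ω in B, (ℙ[fun ω => Mt ω ^ 2 - Vt ω|ℱ s₀]) ω ∂ℙ := h1.symm
      _ = ∫ ω in B, (Ms ω ^ 2 - Vs ω) ∂ℙ :=
          setIntegral_congr_ae hBm (hqv.mono fun ω hω _ => hω)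
  -- combine
  have hcomb : ∫ ω in B, (Mt ω - Ms ω) ^ 2 ∂ℙ ≤ 8 * (ℙ B).toReal := by
    have e0 : ∫ ω in B, (Mt ω - Ms ω) ^ 2 ∂ℙ
        = ∫ ω in B, ((((Mt ω ^ 2 - Vt ω) - (Ms ω ^ 2 - Vs ω)) + (Vt ω - Vs ω))
            - 2 * (Ms ω * Mt ω - Ms ω * Ms ω)) ∂ℙ :=
      integral_congr_ae (ae_of_all _ fun ω => by ring)
    have e5 : ∫ ω in B, ((((Mt ω ^ 2 - Vt ω) - (Ms ω ^ 2 - Vs ω)) + (Vt ω - Vs ω))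
            - 2 * (Ms ω * Mt ω - Ms ω * Ms ω)) ∂ℙ
        = (∫ ω in B, (((Mt ω ^ 2 - Vt ω) - (Ms ω ^ 2 - Vs ω)) + (Vt ω - Vs ω)) ∂ℙ)
          - ∫ ω in B, 2 * (Ms ω * Mt ω - Ms ω * Ms ω) ∂ℙ :=
      integral_sub ((hiQt.integrableOn.sub hiQs.integrableOn).add hiVd.integrableOn)
        ((hiMM.integrableOn.sub hiMsq.integrableOn).const_mul 2)
    have e2 : ∫ ω in B, (((Mt ω ^ 2 - Vt ω) - (Ms ω ^ 2 - Vs ω)) + (Vt ω - Vs ω)) ∂ℙ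
        = (∫ ω in B, ((Mt ω ^ 2 - Vt ω) - (Ms ω ^ 2 - Vs ω)) ∂ℙ)
          + ∫ ω in B, (Vt ω - Vs ω) ∂ℙ :=
      integral_add (hiQt.integrableOn.sub hiQs.integrableOn) hiVd.integrableOn
    have e1 : ∫ ω in B, ((Mt ω ^ 2 - Vt ω) - (Ms ω ^ 2 - Vs ω)) ∂ℙ
        = (∫ ω in B, (Mt ω ^ 2 - Vt ω) ∂ℙ) - ∫ ω in B, (Ms ω ^ 2 - Vs ω) ∂ℙ :=
      integral_sub hiQt.integrableOn hiQs.integrableOn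
    have e3 : ∫ ω in B, (Ms ω * Mt ω - Ms ω * Ms ω) ∂ℙ
        = (∫ ω in B, Ms ω * Mt ω ∂ℙ) - ∫ ω in B, Ms ω * Ms ω ∂ℙ :=
      integral_sub hiMM.integrableOn hiMsq.integrableOn
    have e4 : ∫ ω in B, 2 * (Ms ω * Mt ω - Ms ω * Ms ω) ∂ℙ
        = 2 * ∫ ω in B, (Ms ω * Mt ω - Ms ω * Ms ω) ∂ℙ :=
      integral_const_mul 2 _
    have hVle : ∫ ω in B, (Vt ω - Vs ω) ∂ℙ ≤ 8 * (ℙ B).toReal := by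
      calc ∫ ω in B, (Vt ω - Vs ω) ∂ℙ ≤ ∫ _ω in B, (8:ℝ) ∂ℙ :=
            setIntegral_mono_on hiVd.integrableOn
              (integrableOn_const (measure_ne_top _ _)) hBm
              (fun ω _ => (hVd ω).2)
        _ = 8 * (ℙ B).toReal := by rw [setIntegral_const, smul_eq_mul, mul_comm]; rfl
    linarith [e0, e5, e2, e1, e3, e4, hVle, heq1, heq2]
  have hlow : 16 * (ℙ (B ∩ {ω | Mt ω - Ms ω ≤ -4})).toReal
      ≤ ∫ ω in B ∩ {ω | Mt ω - Ms ω ≤ -4}, (Mt ω - Ms ω) ^ 2 ∂ℙ := by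
    apply setIntegral_ge_of_const_le_real hDm (measure_ne_top _ _)
    · intro ω hω
      have h4 : Mt ω - Ms ω ≤ -4 := hω.2
      nlinarith
    · exact hiSq.integrableOn
  have hmono : ∫ ω in B ∩ {ω | Mt ω - Ms ω ≤ -4}, (Mt ω - Ms ω) ^ 2 ∂ℙ
      ≤ ∫ ω in B, (Mt ω - Ms ω) ^ 2 ∂ℙ := by
    apply setIntegral_mono_set hiSq.integrableOn
    · exact ae_of_all _ fun ω => sq_nonneg _
    · exact HasSubset.Subset.eventuallyLE Set.inter_subset_left
  have hDR : 2 * (ℙ (B ∩ {ω | Mt ω - Ms ω ≤ -4})).toReal ≤ (ℙ B).toReal := by nlinarith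
  rw [ENNReal.le_div_iff_mul_le (Or.inl (by norm_num)) (Or.inl (by norm_num))]
  rw [← ENNReal.ofReal_toReal (measure_ne_top ℙ (B ∩ {ω | Mt ω - Ms ω ≤ -4})),
    ← ENNReal.ofReal_toReal (measure_ne_top ℙ B), ← ENNReal.ofReal_ofNat 2,
    ← ENNReal.ofReal_mul ENNReal.toReal_nonneg]
  exact ENNReal.ofReal_le_ofReal (by rw [mul_comm]; exact hDR)

theorem mainEst12 {Ω : Type*} [MeasureSpace Ω] [IsProbabilityMeasure (ℙ : Measure Ω)]
    (ℱ : Filtration ℝ (inferInstance : MeasurableSpace Ω))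
    (M V : ℝ → Ω → ℝ) (c : ℝ) (hc : 0 ≤ c)
    (hMmeas : ∀ s : ℝ, 0 ≤ s → StronglyMeasurable[ℱ s] (M s))
    (hVmeas : ∀ s : ℝ, 0 ≤ s → StronglyMeasurable (V s))
    (hMbd : ∀ s : ℝ, 0 ≤ s → ∀ ω, |M s ω| ≤ 1 + c * s)
    (hVbd : ∀ s : ℝ, 0 ≤ s → ∀ ω, |V s ω| ≤ s)
    (hVincr : ∀ s u : ℝ, 0 ≤ s → s ≤ u → ∀ ω, 0 ≤ V u ω - V s ω ∧ V u ω - V s ω ≤ u - s)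
    (hmart : ∀ s u : ℝ, 0 ≤ s → s ≤ u → ℙ[M u|ℱ s] =ᵐ[ℙ] M s)
    (hqv : ∀ s u : ℝ, 0 ≤ s → s ≤ u →
        ℙ[fun ω => M u ω ^ 2 - V u ω|ℱ s] =ᵐ[ℙ] fun ω => M s ω ^ 2 - V s ω)
    (t : ℝ) (ht0 : 0 < t) (G : Set Ω)
    (hG : ∀ ω ∈ G, ∀ k : ℕ, 8 * (k : ℝ) + 8 ≤ t →
      M (8 * (k : ℝ) + 8) ω - M (8 * (k : ℝ)) ω ≤ -4) :
    ℙ G ≤ ENNReal.ofReal (2 * Real.exp (-t / 32)) := by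
  -- one-step estimate
  have key : ∀ s : ℝ, 0 ≤ s → ∀ B : Set Ω, MeasurableSet[ℱ s] B →
      ℙ (B ∩ {ω | M (s + 8) ω - M s ω ≤ -4}) ≤ ℙ B / 2 := by
    intro s hs B hB
    have hs8 : (0:ℝ) ≤ s + 8 := by linarith
    have hss8 : s ≤ s + 8 := by linarith
    refine oneStep12 ℱ s (M s) (M (s + 8)) (V s) (V (s + 8))
      (1 + c * s) (1 + c * (s + 8)) (s + 8)
      (by nlinarith) (by nlinarith)
      (hMmeas s hs) ((hMmeas (s + 8) hs8).mono (ℱ.le _)) (hVmeas s hs) (hVmeas (s + 8) hs8)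
      (hMbd s hs) (hMbd (s + 8) hs8)
      (fun ω => (hVbd s hs ω).trans (by linarith)) (hVbd (s + 8) hs8)
      (fun ω => ⟨(hVincr s (s + 8) hs hss8 ω).1, by linarith [(hVincr s (s + 8) hs hss8 ω).2]⟩)
      (hmart s (s + 8) hs hss8) (hqv s (s + 8) hs hss8) B hB
  -- iterated events
  set A : ℕ → Set Ω := fun k => {ω | M (8 * (k : ℝ) + 8) ω - M (8 * (k : ℝ)) ω ≤ -4}
    with hAdef
  set E : ℕ → Set Ω := fun n => Nat.rec Set.univ (fun k Ek => Ek ∩ A k) n with hEdef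
  have hE0 : E 0 = Set.univ := rfl
  have hEsucc : ∀ n, E (n + 1) = E n ∩ A n := fun n => rfl
  have hEmeas : ∀ n : ℕ, MeasurableSet[ℱ (8 * (n : ℝ))] (E n) := by
    intro n
    induction n with
    | zero => exact MeasurableSet.univ
    | succ n ih =>
      rw [hEsucc]
      apply MeasurableSet.inter
      · exact ℱ.mono (by push_cast; linarith) _ ih
      · have h1 : StronglyMeasurable[ℱ (8 * ((n : ℝ) + 1))] (M (8 * (n : ℝ) + 8)) := by
          have := hMmeas (8 * (n : ℝ) + 8) (by positivity)
          have hcast : 8 * ((n : ℝ) + 1) = 8 * (n : ℝ) + 8 := by ring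
          rw [hcast]
          exact this
        have h2 : StronglyMeasurable[ℱ (8 * ((n : ℝ) + 1))] (M (8 * (n : ℝ))) :=
          (hMmeas (8 * (n : ℝ)) (by positivity)).mono (ℱ.mono (by linarith))
        have hcast2 : ((n : ℝ) + 1) = ((n + 1 : ℕ) : ℝ) := by push_cast; ring
        rw [← hcast2]
        exact measurableSet_le (h1.measurable.sub h2.measurable) measurable_const
  have hEbound : ∀ n : ℕ, ℙ (E n) ≤ (1 / 2 : ENNReal) ^ n := by
    intro n
    induction n with
    | zero => rw [hE0]; simp
    | succ n ih =>
      rw [hEsucc]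
      have hk := key (8 * (n : ℝ)) (by positivity) (E n) (hEmeas n)
      have hAeq : A n = {ω | M (8 * (n : ℝ) + 8) ω - M (8 * (n : ℝ)) ω ≤ -4} := rfl
      calc ℙ (E n ∩ A n) ≤ ℙ (E n) / 2 := hk
        _ ≤ (1 / 2 : ENNReal) ^ n / 2 := ENNReal.div_le_div_right ih 2
        _ = (1 / 2 : ENNReal) ^ (n + 1) := by
            rw [pow_succ, div_eq_mul_inv]
            congr 1
            simp
  set n : ℕ := ⌊t / 8⌋₊ with hndef
  have h8n : 8 * (n : ℝ) ≤ t := by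
    have h := Nat.floor_le (by positivity : (0:ℝ) ≤ t / 8)
    rw [← hndef] at h
    linarith
  have hsubset : G ⊆ E n := by
    intro ω hω
    have haux : ∀ m : ℕ, 8 * (m : ℝ) ≤ t → ω ∈ E m := by
      intro m
      induction m with
      | zero => intro _; rw [hE0]; trivial
      | succ m ih =>
        intro hm
        push_cast at hm
        have hm' : 8 * ((m : ℝ)) + 8 ≤ t := by linarith
        rw [hEsucc]
        exact ⟨ih (by linarith), hG ω hω m hm'⟩
    exact haux n h8n
  calc ℙ G ≤ ℙ (E n) := measure_mono hsubset
    _ ≤ (1 / 2 : ENNReal) ^ n := hEbound n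
    _ ≤ ENNReal.ofReal (2 * Real.exp (-t / 32)) := by
        have h1 : ((1 / 2 : ENNReal)) ^ n = ENNReal.ofReal ((1 / 2 : ℝ) ^ n) := by
          rw [ENNReal.ofReal_pow (by norm_num : (0:ℝ) ≤ 1 / 2)]
          congr 1
          rw [ENNReal.ofReal_div_of_pos (by norm_num), ENNReal.ofReal_one,
            ENNReal.ofReal_ofNat, one_div]
        rw [h1]
        apply ENNReal.ofReal_le_ofReal
        have hlog : (1/4 : ℝ) ≤ Real.log 2 := by
          have := Real.log_two_gt_d9
          linarith
        have hn1 : t / 8 ≤ (n : ℝ) + 1 := by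
          have h := Nat.lt_floor_add_one (t / 8)
          rw [← hndef] at h
          linarith
        have hhalf : (1 / 2 : ℝ) ^ n = Real.exp ((n : ℝ) * (-Real.log 2)) := by
          rw [Real.exp_nat_mul, Real.exp_neg, Real.exp_log two_pos]
          norm_num
        have hrhs : 2 * Real.exp (-t / 32) = Real.exp (Real.log 2 + -t / 32) := by
          rw [Real.exp_add, Real.exp_log two_pos]
        rw [hhalf, hrhs]
        apply Real.exp_le_exp.mpr
        have h2 : t / 8 * (1 / 4) ≤ ((n : ℝ) + 1) * Real.log 2 :=
          mul_le_mul hn1 hlog (by norm_num) (by positivity)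
        nlinarith


/-- Martingale-problem characterization of the Jacobi process of dimension
`(2, 2+2κ)` started from 0: a continuous `[0,1]`-valued process `Y` with `Y 0 = 0`
such that, for some filtration, `M_t := Y_t - ∫_0^t (2 - (4+2κ) Y_s) ds` is a
martingale with quadratic variation `∫_0^t 4 Y_s (1 - Y_s) ds`. -/
def IsJacobi {Ω : Type*} [MeasureSpace Ω] (κ : ℝ) (Y : ℝ → Ω → ℝ) : Prop :=
  (∀ ω, Continuous fun t => Y t ω) ∧
  (∀ ω t, Y t ω ∈ Set.Icc (0:ℝ) 1) ∧
  (∀ ω, Y 0 ω = 0) ∧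
  ∃ ℱ : Filtration ℝ (inferInstance : MeasurableSpace Ω),
    Adapted ℱ Y ∧
    (∀ t, Integrable (Y t) ℙ) ∧
    (∀ s t : ℝ, 0 ≤ s → s ≤ t →
      (ℙ[(fun ω => Y t ω - ∫ u in (0:ℝ)..t, (2 - (4 + 2 * κ) * Y u ω))|ℱ s]
        =ᵐ[ℙ] fun ω => Y s ω - ∫ u in (0:ℝ)..s, (2 - (4 + 2 * κ) * Y u ω))) ∧
    (∀ s t : ℝ, 0 ≤ s → s ≤ t →
      (ℙ[(fun ω => (Y t ω - ∫ u in (0:ℝ)..t, (2 - (4 + 2 * κ) * Y u ω)) ^ 2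
            - ∫ u in (0:ℝ)..t, 4 * Y u ω * (1 - Y u ω))|ℱ s]
        =ᵐ[ℙ] fun ω => (Y s ω - ∫ u in (0:ℝ)..s, (2 - (4 + 2 * κ) * Y u ω)) ^ 2
            - ∫ u in (0:ℝ)..s, 4 * Y u ω * (1 - Y u ω)))

/-- For the Jacobi process `Y` of dimension `(2, 2+2κ)` started at 0 and
`α_κ = 1/(4+2κ)`, the hitting time `T_Y(α_κ)` of `α_κ` satisfies
`P(T_Y(α_κ) > t) ≤ 2 exp(-t/32)` for every `t ≥ 2α_κ`. (The event `{T_Y(α_κ) > t}` is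
expressed as `Y` not reaching `α_κ` on `(0, t]`.) -/
theorem stmt12 {Ω : Type*} [MeasureSpace Ω] [IsProbabilityMeasure (ℙ : Measure Ω)]
    (κ : ℝ) (hκ : 0 < κ) (Y : ℝ → Ω → ℝ) (hY : IsJacobi κ Y)
    (t : ℝ) (ht : 2 * (1 / (4 + 2 * κ)) ≤ t) :
    ℙ {ω | ∀ s ∈ Set.Ioc (0:ℝ) t, Y s ω ≠ 1 / (4 + 2 * κ)}
      ≤ ENNReal.ofReal (2 * Real.exp (-t / 32)) := by
  classical
  obtain ⟨hcont, hIcc, hY0, ℱ, hadap, hYint, hmart, hqv⟩ := hY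
  have hκ4 : (0:ℝ) < 4 + 2 * κ := by linarith
  have hα0 : (0:ℝ) < 1 / (4 + 2 * κ) := by positivity
  have ht0 : 0 < t := lt_of_lt_of_le (by positivity) ht
  -- pathwise continuity / interval integrability
  have hcontD : ∀ ω, Continuous fun u => 2 - (4 + 2 * κ) * Y u ω := fun ω =>
    continuous_const.sub (continuous_const.mul (hcont ω))
  have hcontQ : ∀ ω, Continuous fun u => 4 * Y u ω * (1 - Y u ω) := fun ω =>
    (continuous_const.mul (hcont ω)).mul (continuous_const.sub (hcont ω))
  have hiiD : ∀ (ω : Ω) (a b : ℝ),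
      IntervalIntegrable (fun u => 2 - (4 + 2 * κ) * Y u ω) volume a b :=
    fun ω a b => (hcontD ω).intervalIntegrable a b
  have hiiQ : ∀ (ω : Ω) (a b : ℝ),
      IntervalIntegrable (fun u => 4 * Y u ω * (1 - Y u ω)) volume a b :=
    fun ω a b => (hcontQ ω).intervalIntegrable a b
  apply mainEst12 ℱ
    (fun r ω => Y r ω - ∫ u in (0:ℝ)..r, (2 - (4 + 2 * κ) * Y u ω))
    (fun r ω => ∫ u in (0:ℝ)..r, 4 * Y u ω * (1 - Y u ω))
    (6 + 2 * κ) (by linarith)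
  -- hMmeas
  · intro s hs
    exact (hadap s).stronglyMeasurable.sub
      (measInt' ℱ Y hadap hcont (fun y => 2 - (4 + 2 * κ) * y) (by continuity) s hs)
  -- hVmeas
  · intro s hs
    exact (measInt' ℱ Y hadap hcont (fun y => 4 * y * (1 - y)) (by continuity) s hs).mono
      (ℱ.le s)
  -- hMbd
  · intro s hs ω
    have hA : |∫ u in (0:ℝ)..s, (2 - (4 + 2 * κ) * Y u ω)| ≤ (6 + 2 * κ) * s := by
      have hb : ∀ u ∈ Set.uIoc (0:ℝ) s, ‖2 - (4 + 2 * κ) * Y u ω‖ ≤ 6 + 2 * κ := by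
        intro u _
        obtain ⟨h0, h1⟩ := hIcc ω u
        rw [Real.norm_eq_abs, abs_le]
        constructor <;> nlinarith
      have h := intervalIntegral.norm_integral_le_of_norm_le_const hb
      rwa [sub_zero, abs_of_nonneg hs, Real.norm_eq_abs] at h
    have hY1 : |Y s ω| ≤ 1 := by
      obtain ⟨h0, h1⟩ := hIcc ω s
      rw [abs_le]; constructor <;> linarith
    calc |Y s ω - ∫ u in (0:ℝ)..s, (2 - (4 + 2 * κ) * Y u ω)|
        ≤ |Y s ω| + |∫ u in (0:ℝ)..s, (2 - (4 + 2 * κ) * Y u ω)| := abs_sub _ _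
      _ ≤ 1 + (6 + 2 * κ) * s := add_le_add hY1 hA
  -- hVbd
  · intro s hs ω
    have hb : ∀ u ∈ Set.uIoc (0:ℝ) s, ‖4 * Y u ω * (1 - Y u ω)‖ ≤ 1 := by
      intro u _
      obtain ⟨h0, h1⟩ := hIcc ω u
      rw [Real.norm_eq_abs, abs_le]
      constructor <;> nlinarith [sq_nonneg (2 * Y u ω - 1)]
    have h := intervalIntegral.norm_integral_le_of_norm_le_const hb
    rwa [sub_zero, abs_of_nonneg hs, Real.norm_eq_abs, one_mul] at h
  -- hVincr
  · intro s u hs hsu ω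
    have hadd := intervalIntegral.integral_add_adjacent_intervals (hiiQ ω 0 s) (hiiQ ω s u)
    have hdiff : (∫ r in (0:ℝ)..u, 4 * Y r ω * (1 - Y r ω))
        - (∫ r in (0:ℝ)..s, 4 * Y r ω * (1 - Y r ω))
        = ∫ r in s..u, 4 * Y r ω * (1 - Y r ω) := by linarith [hadd]
    constructor
    · rw [hdiff]
      apply intervalIntegral.integral_nonneg hsu
      intro r _
      obtain ⟨h0, h1⟩ := hIcc ω r
      nlinarith
    · rw [hdiff]
      have hb : ∀ r ∈ Set.uIoc s u, ‖4 * Y r ω * (1 - Y r ω)‖ ≤ 1 := by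
        intro r _
        obtain ⟨h0, h1⟩ := hIcc ω r
        rw [Real.norm_eq_abs, abs_le]
        constructor <;> nlinarith [sq_nonneg (2 * Y r ω - 1)]
      have h := intervalIntegral.norm_integral_le_of_norm_le_const hb
      calc (∫ r in s..u, 4 * Y r ω * (1 - Y r ω))
          ≤ |∫ r in s..u, 4 * Y r ω * (1 - Y r ω)| := le_abs_self _
        _ ≤ 1 * |u - s| := h
        _ = u - s := by rw [one_mul, abs_of_nonneg (by linarith)]
  -- hmart
  · intro s u hs hsu
    exact hmart s u hs hsu
  -- hqv
  · intro s u hs hsu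
    exact hqv s u hs hsu
  -- t > 0
  · exact ht0
  -- hG : block decay on the event
  · intro ω hω k hk
    have hk0 : (0:ℝ) ≤ 8 * k := by positivity
    -- Y stays < α on [0, t]
    have hlt : ∀ u ∈ Set.Icc (0:ℝ) t, Y u ω < 1 / (4 + 2 * κ) := by
      intro u hu
      by_contra hcon
      push_neg at hcon
      have h0 : Y 0 ω = 0 := hY0 ω
      have hsub := intermediate_value_Icc hu.1 ((hcont ω).continuousOn)
      have hmem : 1 / (4 + 2 * κ) ∈ Set.Icc (Y 0 ω) (Y u ω) := by
        rw [h0]; exact ⟨le_of_lt hα0, hcon⟩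
      obtain ⟨r, hr, hrα⟩ := hsub hmem
      have hr0 : r ≠ 0 := by
        intro h
        subst h
        exact absurd ((h0).symm.trans hrα) (ne_of_lt hα0)
      exact hω r ⟨lt_of_le_of_ne hr.1 (Ne.symm hr0), le_trans hr.2 hu.2⟩ hrα
    have hadd := intervalIntegral.integral_add_adjacent_intervals
      (hiiD ω 0 (8 * k)) (hiiD ω (8 * k) (8 * k + 8))
    have hint8 : (8:ℝ) ≤ ∫ u in (8 * (k:ℝ))..(8 * k + 8), (2 - (4 + 2 * κ) * Y u ω) := by
      have hmono := intervalIntegral.integral_mono_on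
        (by linarith : 8 * (k:ℝ) ≤ 8 * k + 8)
        (intervalIntegrable_const (c := (1:ℝ))) (hiiD ω (8 * k) (8 * k + 8)) ?_
      · have hconst : ∫ _u in (8 * (k:ℝ))..(8 * k + 8), (1:ℝ) = 8 := by simp
        linarith [hmono, hconst]
      · intro u hu
        have hu' : Y u ω < 1 / (4 + 2 * κ) :=
          hlt u ⟨by linarith [hu.1], by linarith [hu.2]⟩
        have hαval : (4 + 2 * κ) * (1 / (4 + 2 * κ)) = 1 := by field_simp
        nlinarith [mul_lt_mul_of_pos_left hu' hκ4]
    have hY8 : Y (8 * (k:ℝ) + 8) ω ≤ 1 := (hIcc ω _).2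
    have hY8' : 0 ≤ Y (8 * (k:ℝ)) ω := (hIcc ω _).1
    have : (∫ u in (0:ℝ)..(8 * (k:ℝ) + 8), (2 - (4 + 2 * κ) * Y u ω))
        - (∫ u in (0:ℝ)..(8 * (k:ℝ)), (2 - (4 + 2 * κ) * Y u ω))
        = ∫ u in (8 * (k:ℝ))..(8 * k + 8), (2 - (4 + 2 * κ) * Y u ω) := by
      linarith [hadd]
    have hgoal : (Y (8 * (k:ℝ) + 8) ω - ∫ u in (0:ℝ)..(8 * (k:ℝ) + 8), (2 - (4 + 2 * κ) * Y u ω))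
        - (Y (8 * (k:ℝ)) ω - ∫ u in (0:ℝ)..(8 * (k:ℝ)), (2 - (4 + 2 * κ) * Y u ω)) ≤ -4 := by
      linarith
    exact hgoal
end
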